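/- arXiv:1603.00711 — 7 statements merged into one kernel-verified Lean document; each statement's English description precedes it below -/
import Mathlib

section
/- Let ℓ be a prime and let Π be a 2×2 matrix over the ring ℤ_ℓ of ℓ-adic integers whose characteristic polynomial has two distinct roots λ, μ ∈ ℤ_ℓ. Set h = v_ℓ(λ − μ). Then there exists a unique natural number e with 0 ≤ e ≤ h such that Π is conjugate, by an element of GL₂(ℤ_ℓ), to the upper-triangular matrix with first row (λ, ℓ^e) and second row (0, μ). -/
open Polynomial

section Aux

variable {ℓ : ℕ} [Fact (Nat.Prime ℓ)]

private lemma auxDvdEntries {R : Type*} [CommRing R] (x : R)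
    (A M B : Matrix (Fin 2) (Fin 2) R) (hM : ∀ i j, x ∣ M i j) (i j : Fin 2) :
    x ∣ (A * M * B) i j := by
  simp only [Matrix.mul_apply]
  exact Finset.dvd_sum fun k _ =>
    (Finset.dvd_sum fun l _ => ((hM l k).mul_left (A i l))).mul_right (B k j)

private lemma auxPrim (x y : ℤ_[ℓ]) (hxy : x ≠ 0 ∨ y ≠ 0) :
    ∃ (k : ℕ) (p q : ℤ_[ℓ]), (IsUnit p ∨ IsUnit q) ∧
      x = (ℓ : ℤ_[ℓ]) ^ k * p ∧ y = (ℓ : ℤ_[ℓ]) ^ k * q := by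
  by_cases hx : x = 0
  · have hy : y ≠ 0 := by tauto
    refine ⟨y.valuation, 0, (PadicInt.unitCoeff hy : ℤ_[ℓ]),
      Or.inr (PadicInt.unitCoeff hy).isUnit, by simp [hx], ?_⟩
    linear_combination PadicInt.unitCoeff_spec hy
  by_cases hy : y = 0
  · refine ⟨x.valuation, (PadicInt.unitCoeff hx : ℤ_[ℓ]), 0,
      Or.inl (PadicInt.unitCoeff hx).isUnit, ?_, by simp [hy]⟩
    linear_combination PadicInt.unitCoeff_spec hx
  rcases le_total x.valuation y.valuation with hmn | hmn
  · have hpow : (ℓ : ℤ_[ℓ]) ^ x.valuation *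
        (ℓ : ℤ_[ℓ]) ^ (y.valuation - x.valuation)
        = (ℓ : ℤ_[ℓ]) ^ y.valuation := by
      rw [← pow_add]; congr 1; omega
    refine ⟨x.valuation, (PadicInt.unitCoeff hx : ℤ_[ℓ]),
      (PadicInt.unitCoeff hy : ℤ_[ℓ]) * (ℓ : ℤ_[ℓ]) ^ (y.valuation - x.valuation),
      Or.inl (PadicInt.unitCoeff hx).isUnit, ?_, ?_⟩
    · linear_combination PadicInt.unitCoeff_spec hx
    · linear_combination PadicInt.unitCoeff_spec hy
        - (PadicInt.unitCoeff hy : ℤ_[ℓ]) * hpow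
  · have hpow : (ℓ : ℤ_[ℓ]) ^ y.valuation *
        (ℓ : ℤ_[ℓ]) ^ (x.valuation - y.valuation)
        = (ℓ : ℤ_[ℓ]) ^ x.valuation := by
      rw [← pow_add]; congr 1; omega
    refine ⟨y.valuation,
      (PadicInt.unitCoeff hx : ℤ_[ℓ]) * (ℓ : ℤ_[ℓ]) ^ (x.valuation - y.valuation),
      (PadicInt.unitCoeff hy : ℤ_[ℓ]),
      Or.inr (PadicInt.unitCoeff hy).isUnit, ?_, ?_⟩
    · linear_combination PadicInt.unitCoeff_spec hx
        - (PadicInt.unitCoeff hx : ℤ_[ℓ]) * hpow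
    · linear_combination PadicInt.unitCoeff_spec hy

private lemma auxMatEq {R : Type*} [CommRing R] {a b c d a' b' c' d' : R}
    (h1 : a = a') (h2 : b = b') (h3 : c = c') (h4 : d = d') :
    !![a, b; c, d] = !![a', b'; c', d'] := by
  rw [h1, h2, h3, h4]

/-- From a conjugation identity for `Pi`, get one for `Pi - lam • 1`. -/
private lemma auxConjSub (Pi : Matrix (Fin 2) (Fin 2) ℤ_[ℓ]) (lam mu c : ℤ_[ℓ])
    (U : GL (Fin 2) ℤ_[ℓ])
    (hU : (↑(U⁻¹) : Matrix (Fin 2) (Fin 2) ℤ_[ℓ]) * Pi * (↑U : Matrix (Fin 2) (Fin 2) ℤ_[ℓ])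
      = !![lam, c; 0, mu]) :
    (↑(U⁻¹) : Matrix (Fin 2) (Fin 2) ℤ_[ℓ]) * (Pi - lam • 1) * (↑U : Matrix (Fin 2) (Fin 2) ℤ_[ℓ])
      = !![0, c; 0, mu - lam] := by
  have h1 : (↑(U⁻¹) : Matrix (Fin 2) (Fin 2) ℤ_[ℓ]) * (lam • (1 : Matrix (Fin 2) (Fin 2) ℤ_[ℓ]))
      * (↑U : Matrix (Fin 2) (Fin 2) ℤ_[ℓ]) = lam • (1 : Matrix (Fin 2) (Fin 2) ℤ_[ℓ]) := by
    rw [mul_smul_comm, Matrix.mul_one, Matrix.smul_mul, U.inv_mul]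
  rw [Matrix.mul_sub, Matrix.sub_mul, hU, h1]
  ext i j
  fin_cases i <;> fin_cases j <;>
    simp [Matrix.one_apply, sub_eq_add_neg]

/-- Reverse conjugation. -/
private lemma auxUnconj (N M : Matrix (Fin 2) (Fin 2) ℤ_[ℓ]) (U : GL (Fin 2) ℤ_[ℓ])
    (hU : (↑(U⁻¹) : Matrix (Fin 2) (Fin 2) ℤ_[ℓ]) * N * (↑U : Matrix (Fin 2) (Fin 2) ℤ_[ℓ]) = M) :
    N = (↑U : Matrix (Fin 2) (Fin 2) ℤ_[ℓ]) * M * (↑(U⁻¹) : Matrix (Fin 2) (Fin 2) ℤ_[ℓ]) := by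
  rw [← hU]
  calc N = ((↑U : Matrix (Fin 2) (Fin 2) ℤ_[ℓ]) * ↑(U⁻¹)) * N * ((↑U : Matrix (Fin 2) (Fin 2) ℤ_[ℓ]) * ↑(U⁻¹)) := by
        rw [U.mul_inv]; simp
    _ = (↑U : Matrix (Fin 2) (Fin 2) ℤ_[ℓ]) * ((↑(U⁻¹) : Matrix (Fin 2) (Fin 2) ℤ_[ℓ]) * N * ↑U) * ↑(U⁻¹) := by
        noncomm_ring

end Aux

set_option maxHeartbeats 1000000 in
/-- Let `ℓ` be a prime and `Pi` a 2×2 matrix over `ℤ_ℓ` whose characteristic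
polynomial has two distinct roots `λ, μ ∈ ℤ_ℓ`.  With `h = v_ℓ(λ - μ)`, there is a unique
`e ≤ h` such that `Pi` is conjugate over `ℤ_ℓ` to `!![λ, ℓ^e; 0, μ]`. -/
theorem stmt0 (ℓ : ℕ) [Fact (Nat.Prime ℓ)]
    (Pi : Matrix (Fin 2) (Fin 2) ℤ_[ℓ]) (lam mu : ℤ_[ℓ])
    (hchar : Matrix.charpoly Pi = (X - C lam) * (X - C mu))
    (hne : lam ≠ mu)
    (h : ℕ) (hh : h = (lam - mu).valuation) :
    ∃! e : ℕ, e ≤ h ∧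
      ∃ U : GL (Fin 2) ℤ_[ℓ],
        (↑(U⁻¹) : Matrix (Fin 2) (Fin 2) ℤ_[ℓ]) * Pi * (↑U : Matrix (Fin 2) (Fin 2) ℤ_[ℓ])
          = !![lam, (ℓ : ℤ_[ℓ]) ^ e; 0, mu] := by
  have hp0 : (ℓ : ℤ_[ℓ]) ≠ 0 := (PadicInt.prime_p).ne_zero
  have hpu : ¬ IsUnit (ℓ : ℤ_[ℓ]) := (PadicInt.prime_p).not_unit
  -- basic consequences of the characteristic polynomial
  have hexp : (X - C lam) * (X - C mu)
      = X ^ 2 - C (lam + mu) * X + C (lam * mu) := by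
    rw [map_add, map_mul]; ring
  have htr : Pi 0 0 + Pi 1 1 = lam + mu := by
    have h1 := Matrix.trace_eq_neg_charpoly_coeff Pi
    rw [hchar, hexp] at h1
    simpa [Matrix.trace_fin_two, coeff_X_pow] using h1
  have hdet : Pi 0 0 * Pi 1 1 - Pi 0 1 * Pi 1 0 = lam * mu := by
    have h1 := Matrix.det_eq_sign_charpoly_coeff Pi
    rw [hchar] at h1
    rw [Matrix.det_fin_two] at h1
    simpa [mul_coeff_zero] using h1
  -- the shifted matrix `N = Pi - lam • 1` has determinant 0
  have hdetN : (Pi 0 0 - lam) * (Pi 1 1 - lam) = Pi 0 1 * Pi 1 0 := by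
    linear_combination hdet - lam * htr
  -- valuation bookkeeping
  have hlmne : lam - mu ≠ 0 := sub_ne_zero.mpr hne
  have hnatAbs : (lam - mu).valuation = h := by
    omega
  have hlmu : lam - mu = (PadicInt.unitCoeff hlmne : ℤ_[ℓ]) * (ℓ : ℤ_[ℓ]) ^ h := by
    rw [← hnatAbs]; exact PadicInt.unitCoeff_spec hlmne
  have hdvd_h : (ℓ : ℤ_[ℓ]) ^ h ∣ mu - lam :=
    ⟨-(PadicInt.unitCoeff hlmne : ℤ_[ℓ]), by linear_combination - hlmu⟩
  have hdvd_le : ∀ k : ℕ, k ≤ h → (ℓ : ℤ_[ℓ]) ^ k ∣ mu - lam := fun k hk =>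
    dvd_trans (pow_dvd_pow _ hk) hdvd_h
  -- Step 1: find a primitive eigenvector and conjugate to upper triangular form
  have step1 : ∃ (V : GL (Fin 2) ℤ_[ℓ]) (c : ℤ_[ℓ]),
      (↑(V⁻¹) : Matrix (Fin 2) (Fin 2) ℤ_[ℓ]) * Pi * (↑V : Matrix (Fin 2) (Fin 2) ℤ_[ℓ])
        = !![lam, c; 0, mu] := by
    obtain ⟨x, y, hk0, hk1, hxy⟩ : ∃ x y : ℤ_[ℓ],
        (Pi 0 0 - lam) * x + Pi 0 1 * y = 0 ∧
        Pi 1 0 * x + (Pi 1 1 - lam) * y = 0 ∧ (x ≠ 0 ∨ y ≠ 0) := by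
      by_cases hca : Pi 0 1 ≠ 0 ∨ lam - Pi 0 0 ≠ 0
      · exact ⟨Pi 0 1, lam - Pi 0 0, by ring, by linear_combination - hdetN, hca⟩
      · push_neg at hca
        obtain ⟨hb, ha⟩ := hca
        have hD : Pi 1 1 - lam = mu - lam := by
          have : Pi 0 0 = lam := by linear_combination - ha
          linear_combination htr - this
        refine ⟨Pi 1 1 - lam, -(Pi 1 0), by linear_combination hdetN, by ring, Or.inl ?_⟩
        rw [hD]
        exact sub_ne_zero.mpr (Ne.symm hne)
    obtain ⟨k, p, q, hpq, hx, hy⟩ := auxPrim x y hxy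
    have he0 : Pi 0 0 * p + Pi 0 1 * q = lam * p := by
      have hz : (ℓ : ℤ_[ℓ]) ^ k * ((Pi 0 0 - lam) * p + Pi 0 1 * q) = 0 := by
        rw [hx, hy] at hk0; linear_combination hk0
      have h2 := (mul_eq_zero.mp hz).resolve_left (pow_ne_zero _ hp0)
      linear_combination h2
    have he1 : Pi 1 0 * p + Pi 1 1 * q = lam * q := by
      have hz : (ℓ : ℤ_[ℓ]) ^ k * (Pi 1 0 * p + (Pi 1 1 - lam) * q) = 0 := by
        rw [hx, hy] at hk1; linear_combination hk1
      have h2 := (mul_eq_zero.mp hz).resolve_left (pow_ne_zero _ hp0)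
      linear_combination h2
    rcases hpq with hp | hq
    · obtain ⟨w, hw⟩ := hp
      rw [← hw] at he0 he1
      have hwi : (↑w⁻¹ : ℤ_[ℓ]) * ↑w = 1 := w.inv_mul
      have hMvi : !![(w : ℤ_[ℓ]), 0; q, 1] * !![(↑w⁻¹ : ℤ_[ℓ]), 0; -(q * ↑w⁻¹), 1] = 1 := by
        rw [Matrix.mul_fin_two, Matrix.one_fin_two]
        refine auxMatEq ?_ ?_ ?_ ?_
        · linear_combination hwi
        · ring
        · ring
        · ring
      have hMiv : !![(↑w⁻¹ : ℤ_[ℓ]), 0; -(q * ↑w⁻¹), 1] * !![(w : ℤ_[ℓ]), 0; q, 1] = 1 := by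
        rw [Matrix.mul_fin_two, Matrix.one_fin_two]
        refine auxMatEq ?_ ?_ ?_ ?_
        · linear_combination hwi
        · ring
        · linear_combination (-q) * hwi
        · ring
      refine ⟨⟨_, _, hMvi, hMiv⟩, (↑w⁻¹ : ℤ_[ℓ]) * Pi 0 1, ?_⟩
      show !![(↑w⁻¹ : ℤ_[ℓ]), 0; -(q * ↑w⁻¹), 1] * Pi * !![(w : ℤ_[ℓ]), 0; q, 1] = _
      conv_lhs => rw [Matrix.eta_fin_two Pi, Matrix.mul_fin_two, Matrix.mul_fin_two]
      refine auxMatEq ?_ ?_ ?_ ?_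
      · linear_combination (↑w⁻¹ : ℤ_[ℓ]) * he0 + lam * hwi
      · ring
      · linear_combination (-(q * (↑w⁻¹ : ℤ_[ℓ]))) * he0 + he1 - lam * q * hwi
      · linear_combination (-(↑w⁻¹ : ℤ_[ℓ])) * he0 + htr + (Pi 0 0 - lam) * hwi
    · obtain ⟨w, hw⟩ := hq
      rw [← hw] at he0 he1
      have hwi : (↑w⁻¹ : ℤ_[ℓ]) * ↑w = 1 := w.inv_mul
      have hMvi : !![p, 1; (w : ℤ_[ℓ]), 0] * !![0, (↑w⁻¹ : ℤ_[ℓ]); 1, -(p * ↑w⁻¹)] = 1 := by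
        rw [Matrix.mul_fin_two, Matrix.one_fin_two]
        refine auxMatEq ?_ ?_ ?_ ?_
        · ring
        · ring
        · ring
        · linear_combination hwi
      have hMiv : !![0, (↑w⁻¹ : ℤ_[ℓ]); 1, -(p * ↑w⁻¹)] * !![p, 1; (w : ℤ_[ℓ]), 0] = 1 := by
        rw [Matrix.mul_fin_two, Matrix.one_fin_two]
        refine auxMatEq ?_ ?_ ?_ ?_
        · linear_combination hwi
        · ring
        · linear_combination (-p) * hwi
        · ring
      refine ⟨⟨_, _, hMvi, hMiv⟩, (↑w⁻¹ : ℤ_[ℓ]) * Pi 1 0, ?_⟩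
      show !![0, (↑w⁻¹ : ℤ_[ℓ]); 1, -(p * ↑w⁻¹)] * Pi * !![p, 1; (w : ℤ_[ℓ]), 0] = _
      conv_lhs => rw [Matrix.eta_fin_two Pi, Matrix.mul_fin_two, Matrix.mul_fin_two]
      refine auxMatEq ?_ ?_ ?_ ?_
      · linear_combination (↑w⁻¹ : ℤ_[ℓ]) * he1 + lam * hwi
      · ring
      · linear_combination he0 - (p * (↑w⁻¹ : ℤ_[ℓ])) * he1 - lam * p * hwi
      · linear_combination (-(↑w⁻¹ : ℤ_[ℓ])) * he1 + htr + (Pi 1 1 - lam) * hwi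
  obtain ⟨V, c, hV⟩ := step1
  -- Step 2: normalize the off-diagonal entry
  obtain ⟨e, he, t, w, hnorm⟩ : ∃ (e : ℕ), e ≤ h ∧ ∃ (t : ℤ_[ℓ]) (w : ℤ_[ℓ]ˣ),
      c + t * (lam - mu) = (w : ℤ_[ℓ]) * (ℓ : ℤ_[ℓ]) ^ e := by
    by_cases hdc : (ℓ : ℤ_[ℓ]) ^ h ∣ c
    · obtain ⟨c', hc'⟩ := hdc
      refine ⟨h, le_refl h, (1 - c') * (↑(PadicInt.unitCoeff hlmne)⁻¹ : ℤ_[ℓ]), 1, ?_⟩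
      have hui : (↑(PadicInt.unitCoeff hlmne)⁻¹ : ℤ_[ℓ]) * ↑(PadicInt.unitCoeff hlmne) = 1 :=
        (PadicInt.unitCoeff hlmne).inv_mul
      rw [Units.val_one, one_mul]
      linear_combination hc' + (1 - c') * (↑(PadicInt.unitCoeff hlmne)⁻¹ : ℤ_[ℓ]) * hlmu
        + (1 - c') * (ℓ : ℤ_[ℓ]) ^ h * hui
    · have hc0 : c ≠ 0 := by rintro rfl; exact hdc (dvd_zero _)
      refine ⟨c.valuation, ?_, 0, PadicInt.unitCoeff hc0, ?_⟩
      · by_contra hlt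
        push_neg at hlt
        exact hdc (dvd_trans (pow_dvd_pow _ (le_of_lt hlt))
          ⟨(PadicInt.unitCoeff hc0 : ℤ_[ℓ]), by
            linear_combination PadicInt.unitCoeff_spec hc0⟩)
      · rw [zero_mul, add_zero]
        exact PadicInt.unitCoeff_spec hc0
  -- the second conjugating matrix
  have hwi : (↑w⁻¹ : ℤ_[ℓ]) * ↑w = 1 := w.inv_mul
  have hWvi : !![(w : ℤ_[ℓ]), t; 0, 1] * !![(↑w⁻¹ : ℤ_[ℓ]), -(↑w⁻¹ * t); 0, 1] = 1 := by
    rw [Matrix.mul_fin_two, Matrix.one_fin_two]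
    refine auxMatEq ?_ ?_ ?_ ?_
    · linear_combination hwi
    · linear_combination (-t) * hwi
    · ring
    · ring
  have hWiv : !![(↑w⁻¹ : ℤ_[ℓ]), -(↑w⁻¹ * t); 0, 1] * !![(w : ℤ_[ℓ]), t; 0, 1] = 1 := by
    rw [Matrix.mul_fin_two, Matrix.one_fin_two]
    refine auxMatEq ?_ ?_ ?_ ?_
    · linear_combination hwi
    · ring
    · ring
    · ring
  set W : GL (Fin 2) ℤ_[ℓ] := ⟨_, _, hWvi, hWiv⟩ with hWdef
  have hstep2 : (↑(W⁻¹) : Matrix (Fin 2) (Fin 2) ℤ_[ℓ]) * !![lam, c; 0, mu]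
      * (↑W : Matrix (Fin 2) (Fin 2) ℤ_[ℓ]) = !![lam, (ℓ : ℤ_[ℓ]) ^ e; 0, mu] := by
    show !![(↑w⁻¹ : ℤ_[ℓ]), -(↑w⁻¹ * t); 0, 1] * !![lam, c; 0, mu]
        * !![(w : ℤ_[ℓ]), t; 0, 1] = _
    rw [Matrix.mul_fin_two, Matrix.mul_fin_two]
    refine auxMatEq ?_ ?_ ?_ ?_
    · linear_combination lam * hwi
    · linear_combination (↑w⁻¹ : ℤ_[ℓ]) * hnorm + ((ℓ : ℤ_[ℓ]) ^ e) * hwi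
    · ring
    · ring
  have hexists : (↑((V * W)⁻¹) : Matrix (Fin 2) (Fin 2) ℤ_[ℓ]) * Pi
      * (↑(V * W) : Matrix (Fin 2) (Fin 2) ℤ_[ℓ]) = !![lam, (ℓ : ℤ_[ℓ]) ^ e; 0, mu] := by
    rw [mul_inv_rev, Units.val_mul, Units.val_mul]
    calc (↑(W⁻¹) : Matrix (Fin 2) (Fin 2) ℤ_[ℓ]) * ↑(V⁻¹) * Pi * (↑V * ↑W)
        = ↑(W⁻¹) * ((↑(V⁻¹) : Matrix (Fin 2) (Fin 2) ℤ_[ℓ]) * Pi * ↑V) * ↑W := by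
          simp only [Matrix.mul_assoc]
      _ = !![lam, (ℓ : ℤ_[ℓ]) ^ e; 0, mu] := by rw [hV, hstep2]
  -- Uniqueness: the content of `Pi - lam • 1` determines the exponent.
  have keydvd : ∀ (k : ℕ), k ≤ h → ∀ (U : GL (Fin 2) ℤ_[ℓ]),
      (↑(U⁻¹) : Matrix (Fin 2) (Fin 2) ℤ_[ℓ]) * Pi * (↑U : Matrix (Fin 2) (Fin 2) ℤ_[ℓ])
        = !![lam, (ℓ : ℤ_[ℓ]) ^ k; 0, mu] →
      ∀ i j, (ℓ : ℤ_[ℓ]) ^ k ∣ (Pi - lam • 1) i j := by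
    intro k hk U hU i j
    have hconj := auxConjSub Pi lam mu ((ℓ : ℤ_[ℓ]) ^ k) U hU
    have hN := auxUnconj (Pi - lam • 1) _ U hconj
    rw [hN]
    refine auxDvdEntries _ _ _ _ (fun i j => ?_) i j
    fin_cases i <;> fin_cases j <;> simp
    exact hdvd_le k hk
  refine ⟨e, ⟨he, V * W, hexists⟩, ?_⟩
  rintro f ⟨hf, U, hU⟩
  have hfe : (ℓ : ℤ_[ℓ]) ^ f ∣ (ℓ : ℤ_[ℓ]) ^ e := by
    have hcontent := keydvd f hf U hU
    have hconjE := auxConjSub Pi lam mu ((ℓ : ℤ_[ℓ]) ^ e) (V * W) hexists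
    have hd := auxDvdEntries ((ℓ : ℤ_[ℓ]) ^ f)
      (↑((V * W)⁻¹) : Matrix (Fin 2) (Fin 2) ℤ_[ℓ]) (Pi - lam • 1)
      (↑(V * W) : Matrix (Fin 2) (Fin 2) ℤ_[ℓ]) hcontent 0 1
    rw [hconjE] at hd
    simpa using hd
  have hef : (ℓ : ℤ_[ℓ]) ^ e ∣ (ℓ : ℤ_[ℓ]) ^ f := by
    have hcontent := keydvd e he (V * W) hexists
    have hconjF := auxConjSub Pi lam mu ((ℓ : ℤ_[ℓ]) ^ f) U hU
    have hd := auxDvdEntries ((ℓ : ℤ_[ℓ]) ^ e)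
      (↑(U⁻¹) : Matrix (Fin 2) (Fin 2) ℤ_[ℓ]) (Pi - lam • 1)
      (↑U : Matrix (Fin 2) (Fin 2) ℤ_[ℓ]) hcontent 0 1
    rw [hconjF] at hd
    simpa using hd
  have h1 := (pow_dvd_pow_iff hp0 hpu).mp hfe
  have h2 := (pow_dvd_pow_iff hp0 hpu).mp hef
  omega
end

section
/- Let ℓ be a prime, λ, μ ∈ ℤ_ℓ with λ ≠ μ, h = v_ℓ(λ − μ), and a, a' ∈ ℤ_ℓ. The upper-triangular matrices with rows (λ, a), (0, μ) and (λ, a'), (0, μ) respectively are conjugate over ℤ_ℓ if and only if min(v_ℓ(a), h) = min(v_ℓ(a'), h). In particular, conjugating the matrix with rows (λ, a), (0, μ) by the unipotent matrix with rows (1, b), (0, 1) replaces a by a − b(λ − μ), and conjugating by the diagonal matrix diag(c, 1) with c ∈ ℤ_ℓˣ replaces a by c·a. -/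
open Classical

/-- `min(v_ℓ(a), h)` with the convention `v_ℓ(0) = ∞`, so that `minVal 0 h = h`. -/
noncomputable def minVal (ℓ : ℕ) [Fact (Nat.Prime ℓ)] (a : ℤ_[ℓ]) (h : ℕ) : ℕ :=
  if a = 0 then h else min a.valuation h

section aux
variable {ℓ : ℕ} [Fact (Nat.Prime ℓ)]

lemma pow_dvd_iff' (x : ℤ_[ℓ]) (hx : x ≠ 0) (n : ℕ) :
    (ℓ : ℤ_[ℓ])^n ∣ x ↔ n ≤ x.valuation := by
  rw [← Ideal.mem_span_singleton, PadicInt.mem_span_pow_iff_le_valuation x hx]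

lemma minVal_le_h' (a : ℤ_[ℓ]) (h : ℕ) : minVal ℓ a h ≤ h := by
  unfold minVal; split
  · exact le_rfl
  · exact min_le_right _ _

lemma pow_minVal_dvd' (a : ℤ_[ℓ]) (h : ℕ) : (ℓ : ℤ_[ℓ])^(minVal ℓ a h) ∣ a := by
  unfold minVal; split
  · simp [*]
  · exact (pow_dvd_iff' a (by assumption) _).2 (min_le_left _ _)

lemma le_minVal' (a : ℤ_[ℓ]) (h n : ℕ) (hn : n ≤ h) (hd : (ℓ : ℤ_[ℓ])^n ∣ a) :
    n ≤ minVal ℓ a h := by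
  unfold minVal; split
  · exact hn
  · exact le_min ((pow_dvd_iff' a (by assumption) n).1 hd) hn

lemma minVal_mono' (d : ℤ_[ℓ]) (hd : d ≠ 0) (h : ℕ) (hh : h = d.valuation)
    (a a' u v y : ℤ_[ℓ]) (hu : IsUnit u) (heq : u * a' = v * a + y * d) :
    minVal ℓ a h ≤ minVal ℓ a' h := by
  have h1 : minVal ℓ a h ≤ h := minVal_le_h' a h
  have h2 : (ℓ : ℤ_[ℓ])^(minVal ℓ a h) ∣ a := pow_minVal_dvd' a h
  have h3 : (ℓ : ℤ_[ℓ])^(minVal ℓ a h) ∣ d := (pow_dvd_iff' d hd _).2 (hh ▸ h1)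
  have h4 : (ℓ : ℤ_[ℓ])^(minVal ℓ a h) ∣ u * a' :=
    heq ▸ dvd_add (h2.mul_left v) (h3.mul_left y)
  exact le_minVal' a' h _ h1 (hu.dvd_mul_left.mp h4)

end aux


section units
variable {R : Type*} [Ring R]

lemma conj_comm' (A B : R) (U : Rˣ) (hU : ↑U⁻¹ * A * ↑U = B) : A * ↑U = ↑U * B := by
  rw [← hU, ← mul_assoc, ← mul_assoc, Units.mul_inv, one_mul]

lemma conj_symm' (A B : R) (U : Rˣ) (hU : ↑U⁻¹ * A * ↑U = B) :
    ↑(U⁻¹)⁻¹ * B * ↑(U⁻¹) = A := by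
  rw [inv_inv, ← hU]
  calc (U : R) * (↑U⁻¹ * A * ↑U) * ↑U⁻¹
      = ((U : R) * ↑U⁻¹) * A * ((U : R) * ↑U⁻¹) := by simp only [mul_assoc]
    _ = A := by rw [Units.mul_inv, one_mul, mul_one]

lemma conj_trans' (A B C : R) (U V : Rˣ) (hU : ↑U⁻¹ * A * ↑U = B)
    (hV : ↑V⁻¹ * B * ↑V = C) : ↑((U * V)⁻¹) * A * ↑(U * V) = C := by
  calc (↑((U * V)⁻¹) : R) * A * ↑(U * V)
      = ↑V⁻¹ * (↑U⁻¹ * A * ↑U) * ↑V := by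
        rw [mul_inv_rev, Units.val_mul, Units.val_mul]; simp only [mul_assoc]
    _ = C := by rw [hU, hV]

end units

set_option maxHeartbeats 1600000 in
/-- Let `ℓ` be a prime, `λ ≠ μ` in `ℤ_ℓ`, `h = v_ℓ(λ-μ)`, and `a, a' ∈ ℤ_ℓ`.
The matrices `!![λ, a; 0, μ]` and `!![λ, a'; 0, μ]` are conjugate over `ℤ_ℓ` iff
`min(v_ℓ(a), h) = min(v_ℓ(a'), h)`.  Moreover, conjugating `!![λ, a; 0, μ]` by the unipotent
matrix `!![1, b; 0, 1]` replaces `a` by `a - b(λ - μ)`, and conjugating by `diag(c, 1)` with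
`c ∈ ℤ_ℓˣ` replaces `a` by `c·a`. -/
theorem stmt2 (ℓ : ℕ) [Fact (Nat.Prime ℓ)] (lam mu : ℤ_[ℓ]) (hne : lam ≠ mu)
    (h : ℕ) (hh : h = (lam - mu).valuation) (a a' : ℤ_[ℓ]) :
    ((∃ U : GL (Fin 2) ℤ_[ℓ],
        (↑(U⁻¹) : Matrix (Fin 2) (Fin 2) ℤ_[ℓ]) * !![lam, a; 0, mu]
            * (↑U : Matrix (Fin 2) (Fin 2) ℤ_[ℓ])
          = !![lam, a'; 0, mu])
      ↔ minVal ℓ a h = minVal ℓ a' h)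
    ∧ (∀ b : ℤ_[ℓ],
        !![1, b; 0, 1] * !![lam, a; 0, mu] * !![1, -b; 0, 1]
          = !![lam, a - b * (lam - mu); 0, mu])
    ∧ (∀ c : ℤ_[ℓ]ˣ,
        !![(c : ℤ_[ℓ]), 0; 0, 1] * !![lam, a; 0, mu] * !![((c⁻¹ : ℤ_[ℓ]ˣ) : ℤ_[ℓ]), 0; 0, 1]
          = !![lam, (c : ℤ_[ℓ]) * a; 0, mu]) := by
  have hd : lam - mu ≠ 0 := sub_ne_zero.2 hne
  have hunip : ∀ t b : ℤ_[ℓ],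
      !![1, b; 0, 1] * !![lam, t; 0, mu] * !![1, -b; 0, 1]
        = !![lam, t - b * (lam - mu); 0, mu] := by
    intro t b
    ext i j; fin_cases i <;> fin_cases j <;>
      (simp [Matrix.mul_apply, Fin.sum_univ_two]; try ring)
  have hdiag : ∀ (t : ℤ_[ℓ]) (c : ℤ_[ℓ]ˣ),
      !![(c : ℤ_[ℓ]), 0; 0, 1] * !![lam, t; 0, mu] * !![((c⁻¹ : ℤ_[ℓ]ˣ) : ℤ_[ℓ]), 0; 0, 1]
        = !![lam, (c : ℤ_[ℓ]) * t; 0, mu] := by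
    intro t c
    have hc : (c : ℤ_[ℓ]) * ((c⁻¹ : ℤ_[ℓ]ˣ) : ℤ_[ℓ]) = 1 := c.mul_inv
    ext i j; fin_cases i <;> fin_cases j <;>
      (simp [Matrix.mul_apply, Fin.sum_univ_two]; try linear_combination lam * hc)
  refine ⟨⟨?_, ?_⟩, fun b => hunip a b, fun c => hdiag a c⟩
  · -- forward direction
    rintro ⟨U, hU⟩
    set M : Matrix (Fin 2) (Fin 2) ℤ_[ℓ] := (↑U : Matrix (Fin 2) (Fin 2) ℤ_[ℓ])
    have hcomm : !![lam, a; 0, mu] * M = M * !![lam, a'; 0, mu] :=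
      conj_comm' _ _ U hU
    have h21 : (!![lam, a; 0, mu] * M) 1 0 = (M * !![lam, a'; 0, mu]) 1 0 := by rw [hcomm]
    have h12 : (!![lam, a; 0, mu] * M) 0 1 = (M * !![lam, a'; 0, mu]) 0 1 := by rw [hcomm]
    simp [Matrix.mul_apply, Fin.sum_univ_two] at h21 h12
    have hz : M 1 0 = 0 := by
      rcases mul_eq_zero.1 (show (lam - mu) * M 1 0 = 0 by linear_combination -h21) with hc | hc
      · exact absurd hc hd
      · exact hc
    have hdet : IsUnit (M 0 0 * M 1 1) := by
      have h' := (Matrix.isUnit_iff_isUnit_det M).1 U.isUnit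
      rwa [Matrix.det_fin_two, hz, mul_zero, sub_zero] at h'
    have hx : IsUnit (M 0 0) := isUnit_of_mul_isUnit_left hdet
    have hw : IsUnit (M 1 1) := isUnit_of_mul_isUnit_right hdet
    refine le_antisymm ?_ ?_
    · exact minVal_mono' (lam - mu) hd h hh a a' (M 0 0) (M 1 1) (M 0 1) hx
        (by linear_combination -h12)
    · exact minVal_mono' (lam - mu) hd h hh a' a (M 1 1) (M 0 0) (-(M 0 1)) hw
        (by linear_combination h12)
  · -- backward direction
    intro hmin
    have mk : ∀ (P Pinv : Matrix (Fin 2) (Fin 2) ℤ_[ℓ]) (t t' : ℤ_[ℓ]),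
        P * Pinv = 1 → Pinv * P = 1 → P * !![lam, t; 0, mu] * Pinv = !![lam, t'; 0, mu] →
        ∃ U : GL (Fin 2) ℤ_[ℓ],
          (↑(U⁻¹) : Matrix (Fin 2) (Fin 2) ℤ_[ℓ]) * !![lam, t; 0, mu]
            * (↑U : Matrix (Fin 2) (Fin 2) ℤ_[ℓ]) = !![lam, t'; 0, mu] := by
      intro P Pinv t t' h1 h2 h3
      exact ⟨⟨Pinv, P, h2, h1⟩, h3⟩
    have htrans : ∀ (t1 t2 t3 : ℤ_[ℓ]),
        (∃ U : GL (Fin 2) ℤ_[ℓ], (↑(U⁻¹) : Matrix (Fin 2) (Fin 2) ℤ_[ℓ]) * !![lam, t1; 0, mu]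
          * (↑U : Matrix (Fin 2) (Fin 2) ℤ_[ℓ]) = !![lam, t2; 0, mu]) →
        (∃ U : GL (Fin 2) ℤ_[ℓ], (↑(U⁻¹) : Matrix (Fin 2) (Fin 2) ℤ_[ℓ]) * !![lam, t2; 0, mu]
          * (↑U : Matrix (Fin 2) (Fin 2) ℤ_[ℓ]) = !![lam, t3; 0, mu]) →
        (∃ U : GL (Fin 2) ℤ_[ℓ], (↑(U⁻¹) : Matrix (Fin 2) (Fin 2) ℤ_[ℓ]) * !![lam, t1; 0, mu]
          * (↑U : Matrix (Fin 2) (Fin 2) ℤ_[ℓ]) = !![lam, t3; 0, mu]) := by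
      rintro t1 t2 t3 ⟨U, hU⟩ ⟨V, hV⟩
      exact ⟨U * V, conj_trans' _ _ _ U V hU hV⟩
    have hsymm : ∀ (t1 t2 : ℤ_[ℓ]),
        (∃ U : GL (Fin 2) ℤ_[ℓ], (↑(U⁻¹) : Matrix (Fin 2) (Fin 2) ℤ_[ℓ]) * !![lam, t1; 0, mu]
          * (↑U : Matrix (Fin 2) (Fin 2) ℤ_[ℓ]) = !![lam, t2; 0, mu]) →
        (∃ U : GL (Fin 2) ℤ_[ℓ], (↑(U⁻¹) : Matrix (Fin 2) (Fin 2) ℤ_[ℓ]) * !![lam, t2; 0, mu]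
          * (↑U : Matrix (Fin 2) (Fin 2) ℤ_[ℓ]) = !![lam, t1; 0, mu]) := by
      rintro t1 t2 ⟨U, hU⟩
      exact ⟨U⁻¹, conj_symm' _ _ U hU⟩
    by_cases hcase : (ℓ : ℤ_[ℓ])^h ∣ a
    · have hma : minVal ℓ a h = h := le_antisymm (minVal_le_h' a h) (le_minVal' a h h le_rfl hcase)
      have hca' : (ℓ : ℤ_[ℓ])^h ∣ a' := by
        have hma' : minVal ℓ a' h = h := hmin ▸ hma
        have := pow_minVal_dvd' a' h
        rwa [hma'] at this
      have hexp : (lam - mu).valuation = h := by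
        omega
      have hfac : lam - mu = (PadicInt.unitCoeff hd : ℤ_[ℓ]) * (ℓ : ℤ_[ℓ])^h := by
        have hsp := PadicInt.unitCoeff_spec hd
        rwa [hexp] at hsp
      have hdvd : ∀ t : ℤ_[ℓ], (ℓ : ℤ_[ℓ])^h ∣ t → ∃ b : ℤ_[ℓ], t = b * (lam - mu) := by
        rintro t ⟨k, rfl⟩
        refine ⟨k * ((PadicInt.unitCoeff hd)⁻¹ : ℤ_[ℓ]ˣ), ?_⟩
        have hinv : (((PadicInt.unitCoeff hd)⁻¹ : ℤ_[ℓ]ˣ) : ℤ_[ℓ])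
            * (PadicInt.unitCoeff hd : ℤ_[ℓ]) = 1 := (PadicInt.unitCoeff hd).inv_mul
        linear_combination (-(k * (((PadicInt.unitCoeff hd)⁻¹ : ℤ_[ℓ]ˣ) : ℤ_[ℓ]))) * hfac
          - (ℓ : ℤ_[ℓ])^h * k * hinv
      obtain ⟨b, hb⟩ := hdvd a hcase
      obtain ⟨b', hb'⟩ := hdvd a' hca'
      have inv1 : ∀ s : ℤ_[ℓ],
          !![1, s; 0, 1] * !![1, -s; 0, 1] = (1 : Matrix (Fin 2) (Fin 2) ℤ_[ℓ]) := by
        intro s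
        ext i j; fin_cases i <;> fin_cases j <;>
          simp [Matrix.mul_apply, Fin.sum_univ_two, Matrix.one_apply]
      have inv1' : ∀ s : ℤ_[ℓ],
          !![1, -s; 0, 1] * !![1, s; 0, 1] = (1 : Matrix (Fin 2) (Fin 2) ℤ_[ℓ]) := by
        intro s; have := inv1 (-s); rwa [neg_neg] at this
      have r1 : ∃ U : GL (Fin 2) ℤ_[ℓ], (↑(U⁻¹) : Matrix (Fin 2) (Fin 2) ℤ_[ℓ]) * !![lam, a; 0, mu]
          * (↑U : Matrix (Fin 2) (Fin 2) ℤ_[ℓ]) = !![lam, (0:ℤ_[ℓ]); 0, mu] := by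
        refine mk !![1, b; 0, 1] !![1, -b; 0, 1] a 0 (inv1 b) (inv1' b) ?_
        rw [hunip a b, hb, sub_self]
      have r2 : ∃ U : GL (Fin 2) ℤ_[ℓ], (↑(U⁻¹) : Matrix (Fin 2) (Fin 2) ℤ_[ℓ]) * !![lam, a'; 0, mu]
          * (↑U : Matrix (Fin 2) (Fin 2) ℤ_[ℓ]) = !![lam, (0:ℤ_[ℓ]); 0, mu] := by
        refine mk !![1, b'; 0, 1] !![1, -b'; 0, 1] a' 0 (inv1 b') (inv1' b') ?_
        rw [hunip a' b', hb', sub_self]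
      exact htrans a 0 a' r1 (hsymm a' 0 r2)
    · have ha : a ≠ 0 := by rintro rfl; exact hcase (dvd_zero _)
      have hlt : a.valuation < h := by
        by_contra hcon
        exact hcase ((pow_dvd_iff' a ha h).2 (le_of_not_gt hcon))
      have ha' : a' ≠ 0 := by
        rintro rfl
        have h0 : minVal ℓ (0:ℤ_[ℓ]) h = h := by unfold minVal; simp
        have h1 : minVal ℓ a h = min a.valuation h := by unfold minVal; rw [if_neg ha]
        omega
      have hv' : a'.valuation = a.valuation := by
        unfold minVal at hmin
        rw [if_neg ha, if_neg ha'] at hmin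
        omega
      have hmm : a'.valuation = a.valuation := by
        omega
      have hspa := PadicInt.unitCoeff_spec ha
      have hspa' := PadicInt.unitCoeff_spec ha'
      rw [hmm] at hspa'
      set m := a.valuation with hm
      set u := PadicInt.unitCoeff ha with hu
      set u' := PadicInt.unitCoeff ha' with hu'
      set c : ℤ_[ℓ]ˣ := u' * u⁻¹ with hc
      have hca : (c : ℤ_[ℓ]) * a = a' := by
        have h5 : ((u⁻¹ : ℤ_[ℓ]ˣ) : ℤ_[ℓ]) * (u : ℤ_[ℓ]) = 1 := u.inv_mul
        rw [hc, Units.val_mul]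
        linear_combination ((u' : ℤ_[ℓ]) * ((u⁻¹ : ℤ_[ℓ]ˣ) : ℤ_[ℓ])) * hspa
          + ((u' : ℤ_[ℓ]) * (ℓ : ℤ_[ℓ])^m) * h5 - hspa'
      refine mk !![(c : ℤ_[ℓ]), 0; 0, 1] !![((c⁻¹ : ℤ_[ℓ]ˣ) : ℤ_[ℓ]), 0; 0, 1] a a' ?_ ?_ ?_
      · ext i j; fin_cases i <;> fin_cases j <;>
          simp [Matrix.mul_apply, Fin.sum_univ_two, Matrix.one_apply]
      · ext i j; fin_cases i <;> fin_cases j <;>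
          simp [Matrix.mul_apply, Fin.sum_univ_two, Matrix.one_apply]
      · rw [hdiag a c, hca]
end

section
/- Let ℓ be an odd prime, λ, μ ∈ ℤ_ℓ with λ ≡ μ ≡ 1 (mod ℓ), μ ≠ 1, and β = v_ℓ(μ − 1) ≤ v_ℓ(λ − 1). For k ≥ 1, consider the action on (ℤ/ℓ^kℤ)² of the cyclic group generated by the automorphism σ : (x, y) ↦ (λ·x, μ·y). Then the number of orbits of this action is at most k·ℓ^{k+β}. -/
open Finset

section Aux
variable {p : ℕ} [hp : Fact p.Prime]

lemma pow_dvd_iff_le_val {x : ℤ_[p]} (hx : x ≠ 0) (n : ℕ) :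
    (p:ℤ_[p])^n ∣ x ↔ (n:ℤ) ≤ x.valuation := by
  rw [Nat.cast_le, ← PadicInt.mem_span_pow_iff_le_valuation x hx n, Ideal.mem_span_singleton]

lemma val_mul {x y : ℤ_[p]} (hx : x ≠ 0) (hy : y ≠ 0) :
    (x*y).valuation = x.valuation + y.valuation := by
  have hx' : (x : ℚ_[p]) ≠ 0 := fun h => hx (Subtype.ext h)
  have hy' : (y : ℚ_[p]) ≠ 0 := fun h => hy (Subtype.ext h)
  unfold PadicInt.valuation
  push_cast
  exact PadicInt.valuation_mul hx hy

lemma dvd_sum_sub {a : ℤ_[p]} (h : (p:ℤ_[p]) ∣ a - 1) (n : ℕ) :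
    (p:ℤ_[p]) ∣ (∑ j ∈ range n, a^j) - n := by
  have : (∑ j ∈ range n, a^j) - n = ∑ j ∈ range n, (a^j - 1) := by
    rw [Finset.sum_sub_distrib, Finset.sum_const, card_range, nsmul_eq_mul, mul_one]
  rw [this]
  exact Finset.dvd_sum fun j _ => h.trans (by simpa using sub_dvd_pow_sub_pow a 1 j)

lemma p_not_dvd_one : ¬ (p:ℤ_[p]) ∣ 1 := by
  intro h
  have := PadicInt.isUnit_iff.mp (isUnit_of_dvd_one h)
  rw [PadicInt.norm_p] at this
  have h1 := hp.out.one_lt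
  have : (p:ℝ)⁻¹ < 1 := by
    rw [inv_lt_one_iff₀]; right; exact_mod_cast h1
  simp_all

lemma geom_dvd_not_dvd {a : ℤ_[p]} (hodd : p ≠ 2) (h1 : (p:ℤ_[p]) ∣ a - 1) :
    (p:ℤ_[p]) ∣ (∑ j ∈ range p, a^j) ∧ ¬ (p:ℤ_[p])^2 ∣ (∑ j ∈ range p, a^j) := by
  set S := ∑ j ∈ range p, a^j with hS
  have hdvdS : (p:ℤ_[p]) ∣ S := by
    have := dvd_sum_sub h1 p
    have h2 : (p:ℤ_[p]) ∣ (p:ℤ_[p]) := dvd_refl _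
    simpa using dvd_add this h2
  refine ⟨hdvdS, ?_⟩
  -- S - p = (a-1) * T with p ∣ T
  set T := ∑ j ∈ range p, ∑ t ∈ range j, a^t with hT
  have hST : S - p = T * (a - 1) := by
    rw [hS, hT, Finset.sum_mul]
    have : ∀ j ∈ range p, a^j - 1 = (∑ t ∈ range j, a^t) * (a-1) := fun j _ => (geom_sum_mul a j).symm
    rw [← Finset.sum_congr rfl this, Finset.sum_sub_distrib, Finset.sum_const, card_range,
      nsmul_eq_mul, mul_one]
  have hpT : (p:ℤ_[p]) ∣ T := by
    have h3 : (p:ℤ_[p]) ∣ T - (∑ j ∈ range p, (j:ℤ_[p])) := by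
      rw [hT, ← Finset.sum_sub_distrib]
      exact Finset.dvd_sum fun j _ => dvd_sum_sub h1 j
    have h4 : (p:ℤ_[p]) ∣ (∑ j ∈ range p, (j:ℤ_[p])) := by
      have : (∑ j ∈ range p, (j:ℤ_[p])) = ((∑ j ∈ range p, j : ℕ) : ℤ_[p]) := by push_cast; ring
      rw [this, Finset.sum_range_id]
      have heven : 2 ∣ p - 1 := by
        rcases hp.out.eq_two_or_odd' with h | h
        · exact absurd h hodd
        · exact (Nat.Odd.sub_odd h odd_one).two_dvd
      obtain ⟨c, hc⟩ := heven
      have hdiv : p * (p-1) / 2 = p * c := by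
        rw [hc, show p * (2*c) = 2*(p*c) by ring, Nat.mul_div_cancel_left _ (by norm_num)]
      rw [hdiv]
      push_cast
      exact Dvd.intro c rfl
    have := dvd_add h3 h4
    simpa using this
  intro hcon
  have hp2 : (p:ℤ_[p])^2 ∣ T * (a - 1) := by
    rw [sq]
    exact mul_dvd_mul hpT h1
  have : (p:ℤ_[p])^2 ∣ (p:ℤ_[p]) := by
    have := dvd_sub hcon hp2
    rw [← hST] at this
    simpa using this
  rw [sq] at this
  have h5 : (p:ℤ_[p]) * (p:ℤ_[p]) ∣ (p:ℤ_[p]) * 1 := by simpa using this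
  have hpne : (p:ℤ_[p]) ≠ 0 := Nat.cast_ne_zero.mpr hp.out.ne_zero
  exact p_not_dvd_one ((mul_dvd_mul_iff_left hpne).mp h5)


lemma val_step {a : ℤ_[p]} (hodd : p ≠ 2) (ha : a ≠ 1) (h1 : (p:ℤ_[p]) ∣ a - 1) :
    a^p ≠ 1 ∧ (a^p - 1).valuation = (a - 1).valuation + 1 := by
  obtain ⟨hd, hnd⟩ := geom_dvd_not_dvd hodd h1
  set S := ∑ j ∈ range p, a^j with hS
  have hSne : S ≠ 0 := fun h => hnd (h ▸ dvd_zero _)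
  have ha1 : a - 1 ≠ 0 := sub_ne_zero.mpr ha
  have hgeom : a^p - 1 = S * (a - 1) := (geom_sum_mul a p).symm
  have hne : a^p - 1 ≠ 0 := hgeom ▸ mul_ne_zero hSne ha1
  have hvS : S.valuation = 1 := by
    have h1' : ((1:ℕ):ℤ) ≤ S.valuation := (pow_dvd_iff_le_val hSne 1).mp (by simpa using hd)
    have h2' : ¬ ((2:ℕ):ℤ) ≤ S.valuation := fun hc => hnd ((pow_dvd_iff_le_val hSne 2).mpr hc)
    push_cast at h1' h2'
    omega
  constructor
  · exact fun h => hne (by rw [h, sub_self])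
  · rw [hgeom, val_mul hSne ha1, hvS]; ring

lemma val_coprime {a : ℤ_[p]} (ha : a ≠ 1) (h1 : (p:ℤ_[p]) ∣ a - 1) {j : ℕ} (hj : ¬ p ∣ j) :
    a^j ≠ 1 ∧ (a^j - 1).valuation = (a - 1).valuation := by
  set S := ∑ t ∈ range j, a^t with hS
  have hnd : ¬ (p:ℤ_[p]) ∣ S := by
    intro h
    have h2 : (p:ℤ_[p]) ∣ (j:ℤ_[p]) := by
      have := dvd_sub h (dvd_sum_sub h1 j)
      rw [← hS, sub_sub_cancel] at this; exact this
    have h3 : (p:ℤ_[p]) ∣ ((j:ℤ) : ℤ_[p]) := by exact_mod_cast h2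
    have h4 : ((p:ℤ)^1 ∣ (j:ℤ)) := (PadicInt.pow_p_dvd_int_iff 1 (j:ℤ)).mp (by simpa using h3)
    rw [pow_one] at h4
    exact hj (Int.ofNat_dvd.mp (by exact_mod_cast h4))
  have hSne : S ≠ 0 := fun h => hnd (h ▸ dvd_zero _)
  have ha1 : a - 1 ≠ 0 := sub_ne_zero.mpr ha
  have hgeom : a^j - 1 = S * (a - 1) := (geom_sum_mul a j).symm
  have hne : a^j - 1 ≠ 0 := hgeom ▸ mul_ne_zero hSne ha1
  have hvS : S.valuation = 0 := by
    have h2' : ¬ ((1:ℕ):ℤ) ≤ S.valuation := fun hc => hnd (by simpa using (pow_dvd_iff_le_val hSne 1).mpr hc)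
    have := Nat.zero_le S.valuation
    push_cast at h2'
    omega
  constructor
  · exact fun h => hne (by rw [h, sub_self])
  · rw [hgeom, val_mul hSne ha1, hvS]; ring

lemma val_lte {a : ℤ_[p]} (hodd : p ≠ 2) (ha : a ≠ 1) (h1 : (p:ℤ_[p]) ∣ a - 1)
    {i : ℕ} (hi : i ≠ 0) :
    a^i ≠ 1 ∧ (a^i - 1).valuation = (a - 1).valuation + padicValNat p i := by
  have key : ∀ s : ℕ, a^(p^s) ≠ 1 ∧ (a^(p^s) - 1).valuation = (a - 1).valuation + s ∧
      (p:ℤ_[p]) ∣ a^(p^s) - 1 := by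
    intro s
    induction s with
    | zero => simpa using ⟨ha, h1⟩
    | succ s ih =>
      obtain ⟨hne, hval, hdvd⟩ := ih
      obtain ⟨hne', hval'⟩ := val_step hodd hne hdvd
      rw [← pow_mul, ← pow_succ] at hne' hval'
      refine ⟨hne', by rw [hval', hval]; push_cast; ring, ?_⟩
      have : a^(p^s) - 1 ∣ a^(p^(s+1)) - 1 := by
        rw [pow_succ, pow_mul]
        simpa using sub_dvd_pow_sub_pow (a^(p^s)) 1 p
      exact hdvd.trans this
  have hfac : i.factorization p = padicValNat p i := Nat.factorization_def i hp.out
  set s := i.factorization p with hs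
  set j := i / p^s with hj
  have hij : i = p^s * j := (Nat.ordProj_mul_ordCompl_eq_self i p).symm
  have hpj : ¬ p ∣ j := Nat.not_dvd_ordCompl hp.out hi
  obtain ⟨hne, hval, hdvd⟩ := key s
  obtain ⟨hne', hval'⟩ := val_coprime hne hdvd hpj
  rw [← pow_mul, ← hij] at hne' hval'
  exact ⟨hne', by rw [hval', hval, hfac]⟩

lemma val_lower {a : ℤ_[p]} (h1 : (p:ℤ_[p]) ∣ a - 1) (s : ℕ) :
    (p:ℤ_[p])^s * (a - 1) ∣ a^(p^s) - 1 := by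
  induction s with
  | zero => simpa using dvd_refl _
  | succ s ih =>
    have hgeom : a^(p^(s+1)) - 1 = (∑ j ∈ range p, (a^(p^s))^j) * (a^(p^s) - 1) := by
      rw [geom_sum_mul, ← pow_mul, ← pow_succ]
    have hpd : (p:ℤ_[p]) ∣ (∑ j ∈ range p, (a^(p^s))^j) := by
      have hd1 : (p:ℤ_[p]) ∣ a^(p^s) - 1 :=
        h1.trans (by simpa using sub_dvd_pow_sub_pow a 1 (p^s))
      have := dvd_sum_sub hd1 p
      simpa using dvd_add this (dvd_refl (p:ℤ_[p]))
    rw [hgeom, pow_succ]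
    calc (p:ℤ_[p])^s * (p:ℤ_[p]) * (a-1) = (p:ℤ_[p]) * ((p:ℤ_[p])^s * (a-1)) := by ring
    _ ∣ (∑ j ∈ range p, (a^(p^s))^j) * (a^(p^s) - 1) := mul_dvd_mul hpd ih

lemma sum_pow_padicVal_le (hp2 : 2 ≤ p) (m : ℕ) :
    ∑ i ∈ Ico 1 (p^m), p^(padicValNat p i) ≤ m * p^m := by
  rcases Nat.eq_zero_or_pos m with rfl | hm
  · simp
  obtain ⟨m', rfl⟩ : ∃ m', m = m'+1 := ⟨m-1, by omega⟩
  set m := m' + 1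
  set L := p^m with hLdef
  have hL : 1 ≤ L := Nat.one_le_pow _ _ (by omega)
  have pointwise : ∀ i ∈ Ico 1 L,
      p^(padicValNat p i) ≤ 1 + ∑ s ∈ Ico 1 m, (if p^s ∣ i then p^s else 0) := by
    intro i hi
    rw [mem_Ico] at hi
    obtain ⟨hi1, hi2⟩ := hi
    set v := padicValNat p i with hv
    rcases Nat.eq_zero_or_pos v with h0 | h0
    · rw [h0]; simp
    · have hdvd : p^v ∣ i := pow_padicValNat_dvd
      have hple : p^v ≤ i := Nat.le_of_dvd (by omega) hdvd
      have hlt : v < m := by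
        by_contra hc
        push_neg at hc
        have h2 : p^m ≤ p^v := Nat.pow_le_pow_right (by omega) hc
        omega
      calc p^v ≤ ∑ s ∈ Ico 1 m, (if p^s ∣ i then p^s else 0) := by
            refine Finset.single_le_sum (f := fun s => if p^s ∣ i then p^s else 0)
              (fun s _ => Nat.zero_le _) (show v ∈ Ico 1 m by rw [mem_Ico]; omega) |>.trans_eq' ?_
            rw [if_pos hdvd]
      _ ≤ 1 + _ := Nat.le_add_left _ _
  have inner : ∀ s ∈ Ico 1 m, ∑ i ∈ Ico 1 L, (if p^s ∣ i then p^s else 0) ≤ L := by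
    intro s hs
    rw [mem_Ico] at hs
    have h1 : ∑ i ∈ Ico 1 L, (if p^s ∣ i then p^s else 0)
        = #{x ∈ Ico 1 L | p^s ∣ x} * p^s := by
      rw [← Finset.sum_filter, Finset.sum_const, smul_eq_mul]
    have h2 : (Ico 1 L) = Ioc 0 (L-1) := by
      ext x; simp only [mem_Ico, mem_Ioc]; omega
    have h3 : #{x ∈ Ico 1 L | p^s ∣ x} = (L-1) / p^s := by
      rw [h2, Nat.Ioc_filter_dvd_card_eq_div]
    have h4 : (L-1) / p^s ≤ L / p^s := Nat.div_le_div_right (by omega)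
    have h5 : L / p^s = p^(m-s) := by
      rw [hLdef, Nat.pow_div (by omega) (by omega)]
    have h6 : p^(m-s) * p^s = L := by
      rw [← pow_add, hLdef]; congr 1; omega
    rw [h1, h3]
    calc (L-1)/p^s * p^s ≤ p^(m-s) * p^s := by
          apply Nat.mul_le_mul_right
          omega
    _ = L := h6
  calc ∑ i ∈ Ico 1 L, p^(padicValNat p i)
      ≤ ∑ i ∈ Ico 1 L, (1 + ∑ s ∈ Ico 1 m, (if p^s ∣ i then p^s else 0)) :=
        Finset.sum_le_sum pointwise
    _ = (L - 1) + ∑ s ∈ Ico 1 m, ∑ i ∈ Ico 1 L, (if p^s ∣ i then p^s else 0) := by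
        rw [Finset.sum_add_distrib, Finset.sum_const, Nat.card_Ico, smul_eq_mul, mul_one,
          Finset.sum_comm]
    _ ≤ (L - 1) + ∑ s ∈ Ico 1 m, L := by
        exact Nat.add_le_add_left (Finset.sum_le_sum inner) _
    _ ≤ m * L := by
        rw [Finset.sum_const, Nat.card_Ico, smul_eq_mul,
          show m - 1 = m' from by omega,
          show m * L = m' * L + L from by rw [show m = m' + 1 from rfl]; ring]
        omega

lemma card_torsion_le (k w : ℕ) (hw : w ≤ k) :
    Nat.card {y : ZMod (p^k) // (p:ZMod (p^k))^w * y = 0} ≤ p^w := by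
  haveI : NeZero (p^k) := ⟨pow_ne_zero _ hp.out.ne_zero⟩
  have hdpos : 0 < p^(k-w) := Nat.pow_pos hp.out.pos
  have hwpos : 0 < p^w := Nat.pow_pos hp.out.pos
  have hsplit : p^k = p^w * p^(k-w) := by rw [← pow_add]; congr 1; omega
  have hdvd : ∀ y : ZMod (p^k), (p:ZMod (p^k))^w * y = 0 → p^(k-w) ∣ y.val := by
    intro y hy
    have h1 : ((p^w * y.val : ℕ) : ZMod (p^k)) = 0 := by
      push_cast
      rw [ZMod.natCast_val, ZMod.cast_id]
      exact hy
    rw [ZMod.natCast_eq_zero_iff] at h1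
    obtain ⟨c, hc⟩ := h1
    have hc2 : p^w * y.val = p^w * (p^(k-w) * c) := by rw [hc, hsplit, mul_assoc]
    exact ⟨c, Nat.eq_of_mul_eq_mul_left hwpos hc2⟩
  let f : {y : ZMod (p^k) // (p:ZMod (p^k))^w * y = 0} → Fin (p^w) := fun y =>
    ⟨(y:ZMod (p^k)).val / p^(k-w), by
      rw [Nat.div_lt_iff_lt_mul hdpos]
      calc (y:ZMod (p^k)).val < p^k := ZMod.val_lt _
      _ = p^w * p^(k-w) := hsplit⟩
  have hinj : Function.Injective f := by
    rintro ⟨y, hy⟩ ⟨z, hz⟩ h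
    simp only [f, Fin.mk.injEq] at h
    have h1 := Nat.div_mul_cancel (hdvd y hy)
    have h2 := Nat.div_mul_cancel (hdvd z hz)
    exact Subtype.ext (ZMod.val_injective _ (by rw [← h1, ← h2, h]))
  have := Nat.card_le_card_of_injective f hinj
  simpa using this

end Aux

/-- Let `ℓ` be an odd prime, `λ, μ ∈ ℤ_ℓ` with `λ ≡ μ ≡ 1 (mod ℓ)`,
`μ ≠ 1`, and `β = v_ℓ(μ-1) ≤ v_ℓ(λ-1)`.  For `k ≥ 1` and `σ` the automorphism
`(x, y) ↦ (λx, μy)` of `(ℤ/ℓ^kℤ)²`, the number of orbits of the cyclic group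
generated by `σ` is at most `k·ℓ^(k+β)`. -/
theorem stmt9 (ℓ : ℕ) [Fact (Nat.Prime ℓ)] (hodd : ℓ ≠ 2)
    (lam mu : ℤ_[ℓ]) (hlam : (ℓ : ℤ_[ℓ]) ∣ (lam - 1)) (hmu : (ℓ : ℤ_[ℓ]) ∣ (mu - 1))
    (hmne : mu ≠ 1) (β : ℕ) (hβ : β = (mu - 1).valuation)
    (hβle : (mu - 1).valuation ≤ (lam - 1).valuation)
    (k : ℕ) (hk : 1 ≤ k)
    (σ : Equiv.Perm (ZMod (ℓ ^ k) × ZMod (ℓ ^ k)))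
    (hσ : ∀ p : ZMod (ℓ ^ k) × ZMod (ℓ ^ k),
      σ p = (PadicInt.toZModPow k lam * p.1, PadicInt.toZModPow k mu * p.2)) :
    Nat.card
        (MulAction.orbitRel.Quotient (Subgroup.zpowers σ) (ZMod (ℓ ^ k) × ZMod (ℓ ^ k)))
      ≤ k * ℓ ^ (k + β) := by
  classical
  haveI : NeZero (ℓ ^ k) := ⟨pow_ne_zero _ (Fact.out : ℓ.Prime).ne_zero⟩
  set G := Subgroup.zpowers σ with hG
  -- trivial case: β ≥ k
  rcases le_or_gt k β with hcase | hcase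
  · have h1 : Nat.card (MulAction.orbitRel.Quotient G (ZMod (ℓ ^ k) × ZMod (ℓ ^ k))) ≤ Nat.card (ZMod (ℓ ^ k) × ZMod (ℓ ^ k)) :=
      Nat.card_le_card_of_surjective _ Quotient.mk''_surjective
    have h2 : Nat.card (ZMod (ℓ ^ k) × ZMod (ℓ ^ k)) = ℓ ^ k * ℓ ^ k := by
      rw [Nat.card_prod, Nat.card_zmod]
    calc Nat.card (MulAction.orbitRel.Quotient G (ZMod (ℓ ^ k) × ZMod (ℓ ^ k))) ≤ ℓ ^ k * ℓ ^ k := h1.trans_eq h2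
      _ ≤ 1 * ℓ ^ (k + β) := by
          rw [one_mul, ← pow_add]
          exact Nat.pow_le_pow_right (Fact.out : ℓ.Prime).pos (by omega)
      _ ≤ k * ℓ ^ (k + β) := Nat.mul_le_mul_right _ hk
  -- main case
  have hlprime : ℓ.Prime := Fact.out
  have hlpos : 0 < ℓ := hlprime.pos
  have hl2 : 2 ≤ ℓ := hlprime.two_le
  have hmune : mu - 1 ≠ 0 := sub_ne_zero.mpr hmne
  have hβval : ((β:ℕ) : ℤ) = (mu - 1).valuation := by
    rw [hβ]
  have hβ1 : 1 ≤ β := by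
    have := (pow_dvd_iff_le_val hmune 1).mp (by simpa using hmu)
    omega
  set m := k - β with hm
  have hm1 : 1 ≤ m := by omega
  have hkm : k = β + m := by omega
  set L := PadicInt.toZModPow k lam with hL
  set M := PadicInt.toZModPow k mu with hM
  -- power formula
  have hpow : ∀ (i : ℕ) (q : ZMod (ℓ ^ k) × ZMod (ℓ ^ k)), (σ ^ i) q = (L ^ i * q.1, M ^ i * q.2) := by
    intro i
    induction i with
    | zero => intro q; simp
    | succ i ih =>
      intro q
      rw [pow_succ' σ i, Equiv.Perm.mul_apply, ih, hσ]
      simp only [Prod.mk.injEq]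
      constructor <;> ring
  -- `toZModPow` equals one iff divisibility
  have htz : ∀ x : ℤ_[ℓ], PadicInt.toZModPow k x = 1 ↔ ((ℓ:ℤ_[ℓ]))^k ∣ x - 1 := by
    intro x
    rw [← sub_eq_zero]
    have hms : PadicInt.toZModPow k x - 1 = PadicInt.toZModPow k (x - 1) := by
      rw [map_sub, map_one]
    rw [hms, ← RingHom.mem_ker, PadicInt.ker_toZModPow, Ideal.mem_span_singleton]
  have hlamβ : ((ℓ:ℤ_[ℓ]))^β ∣ lam - 1 := by
    rcases eq_or_ne lam 1 with rfl | hlne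
    · simp
    · exact (pow_dvd_iff_le_val (sub_ne_zero.mpr hlne) β).mpr
        (by rw [hβval]; exact_mod_cast hβle)
  have hmuβ : ((ℓ:ℤ_[ℓ]))^β ∣ mu - 1 :=
    (pow_dvd_iff_le_val hmune β).mpr (le_of_eq hβval)
  -- σ ^ (ℓ ^ m) = 1
  have hσtop : σ ^ (ℓ ^ m) = 1 := by
    have haux : ∀ a : ℤ_[ℓ], ((ℓ:ℤ_[ℓ]))^β ∣ a - 1 → (ℓ:ℤ_[ℓ]) ∣ a - 1 →
        PadicInt.toZModPow k (a ^ (ℓ ^ m)) = 1 := by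
      intro a hb h1
      rw [htz]
      have h2 : ((ℓ:ℤ_[ℓ]))^m * (a - 1) ∣ a ^ (ℓ ^ m) - 1 := val_lower h1 m
      have h3 : ((ℓ:ℤ_[ℓ]))^k ∣ ((ℓ:ℤ_[ℓ]))^m * (a - 1) := by
        rw [hkm, pow_add, mul_comm]
        exact mul_dvd_mul_left _ hb
      exact h3.trans h2
    ext q
    · rw [hpow]
      simp only [hL, ← map_pow, haux lam hlamβ hlam, one_mul, Equiv.Perm.coe_one, id_eq]
    · rw [hpow]
      simp only [hM, ← map_pow, haux mu hmuβ hmu, one_mul, Equiv.Perm.coe_one, id_eq]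
  -- σ ^ (ℓ ^ (m-1)) ≠ 1
  have hσnot : σ ^ (ℓ ^ (m - 1)) ≠ 1 := by
    intro hcon
    have h1 : (σ ^ (ℓ ^ (m-1))) ((0 : ZMod (ℓ^k)), (1 : ZMod (ℓ^k))) = ((0:ZMod (ℓ^k)), (1:ZMod (ℓ^k))) := by
      rw [hcon]; rfl
    rw [hpow] at h1
    have h2 : M ^ (ℓ ^ (m-1)) = 1 := by
      have := congrArg Prod.snd h1
      simpa using this
    rw [hM, ← map_pow, htz] at h2
    obtain ⟨hne', hval'⟩ := val_lte hodd hmne hmu (i := ℓ ^ (m-1)) (pow_ne_zero _ hlprime.ne_zero)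
    have h3 : ((k:ℕ):ℤ) ≤ (mu ^ (ℓ ^ (m-1)) - 1).valuation :=
      (pow_dvd_iff_le_val (sub_ne_zero.mpr hne') k).mp h2
    rw [hval', ← hβ, padicValNat.prime_pow] at h3
    omega
  have horder : orderOf σ = ℓ ^ m := by
    have := orderOf_eq_prime_pow (x := σ) (p := ℓ) (n := m - 1) hσnot (by
      rw [show m - 1 + 1 = m by omega]; exact hσtop)
    rwa [show m - 1 + 1 = m by omega] at this
  -- Fintype instances
  haveI : Fintype G := Fintype.ofFinite _
  haveI : ∀ a : G, Fintype (MulAction.fixedBy (ZMod (ℓ ^ k) × ZMod (ℓ ^ k)) a) := fun a => Fintype.ofFinite _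
  haveI hΩ : Fintype (Quotient (MulAction.orbitRel G (ZMod (ℓ ^ k) × ZMod (ℓ ^ k)))) := Fintype.ofFinite _
  have burnside := MulAction.sum_card_fixedBy_eq_card_orbits_mul_card_group G (ZMod (ℓ ^ k) × ZMod (ℓ ^ k))
  -- reindex the sum
  have hcardG : Fintype.card G = orderOf σ := by
    rw [← Nat.card_eq_fintype_card, hG, Nat.card_zpowers]
  let gfun : Fin (orderOf σ) → G := fun i => ⟨σ ^ (i:ℕ), Subgroup.npow_mem_zpowers σ (i:ℕ)⟩
  have hginj : Function.Injective gfun := by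
    intro i j hij
    have h1 : σ ^ (i:ℕ) = σ ^ (j:ℕ) := congrArg Subtype.val hij
    exact Fin.ext (pow_injOn_Iio_orderOf i.2 j.2 h1)
  have hgbij : Function.Bijective gfun :=
    (Fintype.bijective_iff_injective_and_card gfun).mpr ⟨hginj, by rw [Fintype.card_fin, hcardG]⟩
  let e : Fin (orderOf σ) ≃ G := Equiv.ofBijective gfun hgbij
  have hreindex : ∑ a : G, Fintype.card (MulAction.fixedBy (ZMod (ℓ ^ k) × ZMod (ℓ ^ k)) a)
      = ∑ i : Fin (orderOf σ), Fintype.card (MulAction.fixedBy (ZMod (ℓ ^ k) × ZMod (ℓ ^ k)) (e i)) :=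
    (Fintype.sum_equiv e _ _ (fun i => rfl)).symm
  -- the fixed point bound
  have hfixcard : ∀ i : Fin (orderOf σ), (i:ℕ) ≠ 0 →
      Fintype.card (MulAction.fixedBy (ZMod (ℓ ^ k) × ZMod (ℓ ^ k)) (e i)) ≤ ℓ^k * ℓ^(β + padicValNat ℓ (i:ℕ)) := by
    intro i hi0
    set w := β + padicValNat ℓ (i:ℕ) with hw
    have hilt : (i:ℕ) < ℓ ^ m := i.2.trans_eq horder
    have hvlt : padicValNat ℓ (i:ℕ) < m := by
      have hdvd : ℓ ^ (padicValNat ℓ (i:ℕ)) ∣ (i:ℕ) := pow_padicValNat_dvd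
      have h1 : ℓ ^ (padicValNat ℓ (i:ℕ)) ≤ (i:ℕ) := Nat.le_of_dvd (by omega) hdvd
      by_contra hc
      push_neg at hc
      have h2 := Nat.pow_le_pow_right (show 1 ≤ ℓ by omega) hc
      exact absurd (lt_of_le_of_lt h1 hilt) (not_lt.mpr h2)
    have hwk : w ≤ k := by omega
    obtain ⟨hne', hval'⟩ := val_lte hodd hmne hmu (i := (i:ℕ)) hi0
    have hvw : (mu ^ (i:ℕ) - 1).valuation = (w : ℤ) := by
      rw [hval', ← hβ]
    have hsubne : mu ^ (i:ℕ) - 1 ≠ 0 := sub_ne_zero.mpr hne'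
    have hnatAbs : (mu ^ (i:ℕ) - 1).valuation = w := by exact_mod_cast hvw
    have hunit : mu ^ (i:ℕ) - 1 = (PadicInt.unitCoeff hsubne : ℤ_[ℓ]) * (ℓ:ℤ_[ℓ])^w := by
      conv_lhs => rw [PadicInt.unitCoeff_spec hsubne]
      rw [hnatAbs]
    -- image in ZMod
    have hMi : M ^ (i:ℕ) - 1 = (PadicInt.toZModPow k ((PadicInt.unitCoeff hsubne : ℤ_[ℓ]))) * (ℓ:ZMod (ℓ^k))^w :=
      calc M ^ (i:ℕ) - 1 = PadicInt.toZModPow k (mu ^ (i:ℕ) - 1) := by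
            rw [map_sub, map_pow, map_one, hM]
        _ = PadicInt.toZModPow k ((PadicInt.unitCoeff hsubne : ℤ_[ℓ]) * (ℓ:ℤ_[ℓ])^w) :=
            congrArg _ hunit
        _ = (PadicInt.toZModPow k ((PadicInt.unitCoeff hsubne : ℤ_[ℓ]))) * (ℓ:ZMod (ℓ^k))^w := by
            rw [map_mul, map_pow, map_natCast]
    have hu : IsUnit (PadicInt.toZModPow k ((PadicInt.unitCoeff hsubne : ℤ_[ℓ]))) :=
      (PadicInt.unitCoeff hsubne).isUnit.map (PadicInt.toZModPow k)
    -- injection into product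
    have hker : ∀ q : ZMod (ℓ ^ k) × ZMod (ℓ ^ k), (e i) • q = q →
        (ℓ:ZMod (ℓ^k))^w * q.2 = 0 := by
      intro q hq
      have hq' : (σ ^ (i:ℕ)) q = q := by
        rwa [show (e i) • q = (σ ^ (i:ℕ)) q from rfl] at hq
      rw [hpow] at hq'
      have h2 : M ^ (i:ℕ) * q.2 = q.2 := by
        have := congrArg Prod.snd hq'
        simpa using this
      have h3 : (M ^ (i:ℕ) - 1) * q.2 = 0 := by
        rw [sub_mul, one_mul, h2, sub_self]
      rw [hMi, mul_assoc] at h3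
      exact hu.mul_right_eq_zero.mp h3
    have hcard : Nat.card (MulAction.fixedBy (ZMod (ℓ ^ k) × ZMod (ℓ ^ k)) (e i))
        ≤ Nat.card (ZMod (ℓ^k) × {y : ZMod (ℓ^k) // (ℓ:ZMod (ℓ^k))^w * y = 0}) := by
      let f : (MulAction.fixedBy (ZMod (ℓ ^ k) × ZMod (ℓ ^ k)) (e i)) →
          ZMod (ℓ^k) × {y : ZMod (ℓ^k) // (ℓ:ZMod (ℓ^k))^w * y = 0} :=
        fun q => (q.1.1, ⟨q.1.2, hker q.1 q.2⟩)
      have hfinj : Function.Injective f := by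
        rintro ⟨q, hq⟩ ⟨r, hr⟩ hqr
        simp only [f, Prod.mk.injEq, Subtype.mk.injEq] at hqr
        exact Subtype.ext (Prod.ext hqr.1 hqr.2)
      exact Nat.card_le_card_of_injective f hfinj
    have hprod : Nat.card (ZMod (ℓ^k) × {y : ZMod (ℓ^k) // (ℓ:ZMod (ℓ^k))^w * y = 0})
        ≤ ℓ^k * ℓ^w := by
      rw [Nat.card_prod, Nat.card_zmod]
      exact Nat.mul_le_mul_left _ (card_torsion_le k w hwk)
    rw [← Nat.card_eq_fintype_card]
    exact hcard.trans hprod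
  -- total sum bound
  have hsum : ∑ i : Fin (orderOf σ), Fintype.card (MulAction.fixedBy (ZMod (ℓ ^ k) × ZMod (ℓ ^ k)) (e i))
      ≤ k * ℓ^(k+β) * ℓ^m := by
    have hbound : ∀ i : Fin (orderOf σ), Fintype.card (MulAction.fixedBy (ZMod (ℓ ^ k) × ZMod (ℓ ^ k)) (e i))
        ≤ (fun j => if j = 0 then ℓ^k * ℓ^(β+m) else ℓ^k * ℓ^(β + padicValNat ℓ j)) (i:ℕ) := by
      intro i
      rcases eq_or_ne (i:ℕ) 0 with h0 | h0
      · simp only [h0, if_pos rfl]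
        calc Fintype.card (MulAction.fixedBy (ZMod (ℓ ^ k) × ZMod (ℓ ^ k)) (e i)) ≤ Fintype.card (ZMod (ℓ ^ k) × ZMod (ℓ ^ k)) :=
              Fintype.card_le_of_injective _ (Subtype.val_injective)
          _ = ℓ^k * ℓ^(β+m) := by
              rw [← Nat.card_eq_fintype_card, Nat.card_prod, Nat.card_zmod, ← hkm]
      · simp only [if_neg h0]
        exact hfixcard i h0
    calc ∑ i : Fin (orderOf σ), Fintype.card (MulAction.fixedBy (ZMod (ℓ ^ k) × ZMod (ℓ ^ k)) (e i))
        ≤ ∑ i : Fin (orderOf σ), (fun j => if j = 0 then ℓ^k * ℓ^(β+m) else ℓ^k * ℓ^(β + padicValNat ℓ j)) (i:ℕ) :=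
          Finset.sum_le_sum (fun i _ => hbound i)
      _ = ∑ j ∈ range (orderOf σ), (if j = 0 then ℓ^k * ℓ^(β+m) else ℓ^k * ℓ^(β + padicValNat ℓ j)) :=
          Fin.sum_univ_eq_sum_range (fun j => if j = 0 then ℓ^k * ℓ^(β+m) else ℓ^k * ℓ^(β + padicValNat ℓ j)) (orderOf σ)
      _ = ℓ^k * ℓ^(β+m) + ∑ j ∈ Ico 1 (ℓ^m), (if j = 0 then ℓ^k * ℓ^(β+m) else ℓ^k * ℓ^(β + padicValNat ℓ j)) := by
          rw [horder, Finset.range_eq_Ico, Finset.sum_eq_sum_Ico_succ_bot (Nat.pow_pos hlpos)]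
          simp
      _ ≤ ℓ^k * ℓ^(β+m) + ∑ j ∈ Ico 1 (ℓ^m), ℓ^(k+β) * ℓ^(padicValNat ℓ j) := by
          apply Nat.add_le_add_left
          apply Finset.sum_le_sum
          intro j hj
          rw [mem_Ico] at hj
          rw [if_neg (by omega)]
          apply le_of_eq
          rw [← pow_add, ← pow_add]
          congr 1
          omega
      _ = ℓ^(k+β+m) + ℓ^(k+β) * ∑ j ∈ Ico 1 (ℓ^m), ℓ^(padicValNat ℓ j) := by
          rw [← Finset.mul_sum, ← pow_add, show k + (β + m) = k + β + m by omega]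
      _ ≤ ℓ^(k+β+m) + ℓ^(k+β) * (m * ℓ^m) := by
          exact Nat.add_le_add_left (Nat.mul_le_mul_left _ (sum_pow_padicVal_le hl2 m)) _
      _ = (m+1) * ℓ^(k+β) * ℓ^m := by
          rw [pow_add]
          ring
      _ ≤ k * ℓ^(k+β) * ℓ^m := by
          have : m + 1 ≤ k := by omega
          exact Nat.mul_le_mul_right _ (Nat.mul_le_mul_right _ this)
  -- conclude via Burnside
  have hcardG : Fintype.card G = ℓ^m := by
    rw [← Nat.card_eq_fintype_card, hG, Nat.card_zpowers, horder]
  have hkey : Fintype.card (Quotient (MulAction.orbitRel G (ZMod (ℓ ^ k) × ZMod (ℓ ^ k)))) * ℓ^m ≤ (k * ℓ^(k+β)) * ℓ^m := by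
    rw [← hcardG, ← burnside, hreindex]
    rw [hcardG]
    exact hsum
  have hNQ : Nat.card (MulAction.orbitRel.Quotient G (ZMod (ℓ ^ k) × ZMod (ℓ ^ k)))
      = Fintype.card (Quotient (MulAction.orbitRel G (ZMod (ℓ ^ k) × ZMod (ℓ ^ k)))) := Nat.card_eq_fintype_card
  rw [hNQ]
  exact Nat.le_of_mul_le_mul_right hkey (Nat.pow_pos hlpos)
end

section
/- Let ℓ be an odd prime, λ, μ ∈ ℤ_ℓ with λ ≡ μ ≡ 1 (mod ℓ), λ ≠ 1, μ ≠ 1, and set α = v_ℓ(λ − 1) ≥ 1, β = v_ℓ(μ − 1) ≥ 1. Fix k ≥ 1 and let σ be the automorphism of (ℤ/ℓ^kℤ)² given by (x, y) ↦ (λx, μy). For integers 0 ≤ i, j ≤ k − 1, the set S(i,j) of pairs (x, y) ∈ (ℤ/ℓ^kℤ)² such that x has additive order exactly ℓ^{i+1} and y has additive order exactly ℓ^{j+1} is stable under σ; every orbit of ⟨σ⟩ contained in S(i,j) has cardinality ℓ^{ρ(i,j)} where ρ(i,j) = max(0, i − α + 1, j − β + 1), and the number of such orbits is (ℓ−1)²·ℓ^{ν(i,j)}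 where ν(i,j) = min(i + j, i + β − 1, j + α − 1) = i + j − ρ(i,j). -/
open PadicInt

variable {ℓ : ℕ} [Fact (Nat.Prime ℓ)]

lemma aux_dvd_iff_le_val (z : ℤ_[ℓ]) (hz : z ≠ 0) (m : ℕ) :
    (ℓ : ℤ_[ℓ]) ^ m ∣ z ↔ (m : ℤ) ≤ z.valuation := by
  rw [Nat.cast_le, ← PadicInt.mem_span_pow_iff_le_valuation z hz m, Ideal.mem_span_singleton]

lemma aux_emult (z : ℤ_[ℓ]) (hz : z ≠ 0) :
    emultiplicity (ℓ : ℤ_[ℓ]) z = (z.valuation : ℕ∞) := by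
  rw [emultiplicity_eq_coe]
  have hv := Nat.zero_le z.valuation
  constructor
  · rw [aux_dvd_iff_le_val z hz]
  · rw [aux_dvd_iff_le_val z hz]; omega

lemma aux_not_dvd_lam {lam : ℤ_[ℓ]} (hlam : (ℓ : ℤ_[ℓ]) ∣ (lam - 1)) :
    ¬ (ℓ : ℤ_[ℓ]) ∣ lam := by
  intro h
  have : (ℓ : ℤ_[ℓ]) ∣ 1 := by
    have := dvd_sub h hlam
    simpa using this
  exact PadicInt.prime_p.not_dvd_one this

lemma aux_lte (hodd : ℓ ≠ 2) {lam : ℤ_[ℓ]} (hlam : (ℓ : ℤ_[ℓ]) ∣ (lam - 1))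
    (hlne : lam ≠ 1) (α : ℕ) (hα : α = (lam - 1).valuation) (m n : ℕ) :
    (ℓ : ℤ_[ℓ]) ^ m ∣ (lam ^ n - 1) ↔ ℓ ^ (m - α) ∣ n := by
  have hp : Prime ((ℓ : ℕ) : ℤ_[ℓ]) := PadicInt.prime_p
  have hodd' : Odd ℓ := (Fact.out : Nat.Prime ℓ).odd_of_ne_two hodd
  have hne : lam - 1 ≠ 0 := sub_ne_zero.mpr hlne
  have hα1 : 1 ≤ α := by
    have := (aux_dvd_iff_le_val (lam - 1) hne 1).mp (by simpa using hlam)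
    have hv := Nat.zero_le (lam - 1).valuation
    omega
  rcases Nat.eq_zero_or_pos n with rfl | hn
  · simp
  have hn0 : n ≠ 0 := hn.ne'
  set a := n.factorization ℓ with ha
  have hsplit : ℓ ^ a * (n / ℓ ^ a) = n := Nat.ordProj_mul_ordCompl_eq_self n ℓ
  set m' := n / ℓ ^ a with hm'
  have hm'nd : ¬ ℓ ∣ m' := Nat.not_dvd_ordCompl (Fact.out : Nat.Prime ℓ) hn0
  have hxlam : ¬ (ℓ : ℤ_[ℓ]) ∣ lam := aux_not_dvd_lam hlam
  have hxy' : ((ℓ:ℕ) : ℤ_[ℓ]) ∣ lam ^ m' - 1 := by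
    have : lam - 1 ∣ lam ^ m' - 1 := by
      simpa using sub_dvd_pow_sub_pow lam 1 m'
    exact hlam.trans this
  have hxm : ¬ ((ℓ:ℕ) : ℤ_[ℓ]) ∣ lam ^ m' := fun h => hxlam (hp.dvd_of_dvd_pow h)
  have hnd : ¬ ((ℓ:ℕ) : ℤ_[ℓ]) ∣ (m' : ℤ_[ℓ]) := by
    intro h
    have h2 : ((ℓ : ℤ_[ℓ])) ^ 1 ∣ (((m' : ℤ)) : ℤ_[ℓ]) := by
      push_cast
      simpa using h
    rw [PadicInt.pow_p_dvd_int_iff] at h2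
    rw [pow_one] at h2
    exact hm'nd (Int.ofNat_dvd.mp h2)
  have E1 : emultiplicity ((ℓ:ℕ) : ℤ_[ℓ]) (lam ^ m' - 1 ^ m') =
      emultiplicity ((ℓ:ℕ) : ℤ_[ℓ]) (lam - 1) := by
    apply emultiplicity_pow_sub_pow_of_prime hp (by simpa using hlam) hxlam hnd
  have E2 : emultiplicity ((ℓ:ℕ) : ℤ_[ℓ]) ((lam ^ m') ^ (ℓ ^ a) - 1 ^ (ℓ ^ a)) =
      emultiplicity ((ℓ:ℕ) : ℤ_[ℓ]) (lam ^ m' - 1) + a :=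
    emultiplicity_pow_prime_pow_sub_pow_prime_pow hp hodd' (by simpa using hxy') hxm a
  have E3 : emultiplicity ((ℓ:ℕ) : ℤ_[ℓ]) (lam ^ n - 1) = ((α + a : ℕ) : ℕ∞) := by
    have hpow : lam ^ n = (lam ^ m') ^ (ℓ ^ a) := by
      rw [← pow_mul, mul_comm, hsplit]
    rw [hpow, show (1 : ℤ_[ℓ]) = 1 ^ (ℓ ^ a) by rw [one_pow], E2]
    rw [show lam ^ m' - 1 = lam ^ m' - 1 ^ m' by rw [one_pow], E1, aux_emult _ hne, ← hα]
    push_cast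
    ring
  rw [pow_dvd_iff_le_emultiplicity, E3, Nat.cast_le]
  rw [Nat.Prime.pow_dvd_iff_le_factorization (Fact.out : Nat.Prime ℓ) hn0, ← ha]
  omega

lemma aux_ann {k i : ℕ} (hik : i + 1 ≤ k) (c : ℤ_[ℓ]) (x : ZMod (ℓ ^ k))
    (hx : addOrderOf x = ℓ ^ (i + 1)) :
    (PadicInt.toZModPow k c) * x = 0 ↔ (ℓ : ℤ_[ℓ]) ^ (i + 1) ∣ c := by
  haveI : NeZero (ℓ ^ k) := ⟨pow_ne_zero k (Fact.out : Nat.Prime ℓ).ne_zero⟩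
  set z := PadicInt.toZModPow k c with hz
  have hzv : ((z.val : ℕ) : ZMod (ℓ ^ k)) = z := by
    rw [ZMod.natCast_val, ZMod.cast_id]
  have h1 : z * x = z.val • x := by
    conv_lhs => rw [← hzv]
    rw [nsmul_eq_mul]
  have h2 : z.val • x = 0 ↔ ℓ ^ (i + 1) ∣ z.val := by
    rw [← hx, addOrderOf_dvd_iff_nsmul_eq_zero]
  have hker : (ℓ : ℤ_[ℓ]) ^ k ∣ (c - (z.val : ℤ_[ℓ])) := by
    rw [← Ideal.mem_span_singleton, ← PadicInt.ker_toZModPow, RingHom.mem_ker, map_sub,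
      map_natCast, hzv, sub_self]
  have h3 : (ℓ : ℤ_[ℓ]) ^ (i + 1) ∣ c ↔ (ℓ : ℤ_[ℓ]) ^ (i + 1) ∣ (z.val : ℤ_[ℓ]) := by
    have hd : (ℓ : ℤ_[ℓ]) ^ (i + 1) ∣ (c - (z.val : ℤ_[ℓ])) :=
      (pow_dvd_pow _ hik).trans hker
    constructor
    · intro h; have := dvd_sub h hd; simpa using this
    · intro h; have := dvd_add hd h; simpa using this
  have h4 : (ℓ : ℤ_[ℓ]) ^ (i + 1) ∣ ((z.val : ℤ) : ℤ_[ℓ]) ↔ ((ℓ:ℤ) ^ (i+1) : ℤ) ∣ (z.val : ℤ) := by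
    have := PadicInt.pow_p_dvd_int_iff (p := ℓ) (i + 1) (z.val : ℤ)
    simpa using this
  rw [h1, h2, h3]
  constructor
  · intro h
    rw [show ((z.val : ℕ) : ℤ_[ℓ]) = ((z.val : ℤ) : ℤ_[ℓ]) by push_cast; ring, h4]
    exact_mod_cast h
  · intro h
    have : ((ℓ:ℤ) ^ (i+1) : ℤ) ∣ (z.val : ℤ) := by
      rw [← h4]; exact_mod_cast h
    exact_mod_cast this

lemma aux_unit_mul_order {n : ℕ} [NeZero n] (u x : ZMod n) (hu : IsUnit u) :
    addOrderOf (u * x) = addOrderOf x := by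
  have key : ∀ m : ℕ, m • (u * x) = 0 ↔ m • x = 0 := by
    intro m
    rw [nsmul_eq_mul, nsmul_eq_mul, ← mul_assoc, mul_comm (m : ZMod n) u, mul_assoc]
    exact hu.mul_right_eq_zero
  have h1 : addOrderOf (u * x) ∣ addOrderOf x := by
    rw [addOrderOf_dvd_iff_nsmul_eq_zero, key, ← addOrderOf_dvd_iff_nsmul_eq_zero]
  have h2 : addOrderOf x ∣ addOrderOf (u * x) := by
    rw [addOrderOf_dvd_iff_nsmul_eq_zero, ← key, ← addOrderOf_dvd_iff_nsmul_eq_zero]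
  exact Nat.dvd_antisymm h1 h2

lemma aux_isUnit_toZMod {lam : ℤ_[ℓ]} (hlam : (ℓ : ℤ_[ℓ]) ∣ (lam - 1)) (k : ℕ) :
    IsUnit (PadicInt.toZModPow k lam) := by
  have h1 : ¬ (ℓ : ℤ_[ℓ]) ∣ lam := aux_not_dvd_lam hlam
  have h2 : IsUnit lam := by
    rw [PadicInt.isUnit_iff]
    refine le_antisymm (lam.norm_le_one) ?_
    by_contra h
    push_neg at h
    exact h1 ((PadicInt.norm_lt_one_iff_dvd lam).mp h)
  exact h2.map (PadicInt.toZModPow k)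

/-- Let `ℓ` be an odd prime, `λ, μ ∈ ℤ_ℓ` with `λ ≡ μ ≡ 1 (mod ℓ)`,
`λ ≠ 1`, `μ ≠ 1`, `α = v_ℓ(λ-1)`, `β = v_ℓ(μ-1)`.  Fix `k ≥ 1` and let `σ` be the
automorphism `(x, y) ↦ (λx, μy)` of `(ℤ/ℓ^kℤ)²`.  For `0 ≤ i, j ≤ k-1`, the set `S(i,j)`
of pairs whose coordinates have additive orders exactly `ℓ^(i+1)` and `ℓ^(j+1)` is stable
under `σ`; each orbit of `⟨σ⟩` inside `S(i,j)` has cardinality `ℓ^ρ(i,j)` with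
`ρ(i,j) = max(0, i-α+1, j-β+1)`, and the number of such orbits is `(ℓ-1)²·ℓ^ν(i,j)` with
`ν(i,j) = min(i+j, i+β-1, j+α-1) = i+j-ρ(i,j)`. -/
theorem stmt10 (ℓ : ℕ) [Fact (Nat.Prime ℓ)] (hodd : ℓ ≠ 2)
    (lam mu : ℤ_[ℓ]) (hlam : (ℓ : ℤ_[ℓ]) ∣ (lam - 1)) (hmu : (ℓ : ℤ_[ℓ]) ∣ (mu - 1))
    (hlne : lam ≠ 1) (hmne : mu ≠ 1)
    (α β : ℕ) (hα : α = (lam - 1).valuation) (hβ : β = (mu - 1).valuation)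
    (k : ℕ) (hk : 1 ≤ k)
    (σ : Equiv.Perm (ZMod (ℓ ^ k) × ZMod (ℓ ^ k)))
    (hσ : ∀ p : ZMod (ℓ ^ k) × ZMod (ℓ ^ k),
      σ p = (PadicInt.toZModPow k lam * p.1, PadicInt.toZModPow k mu * p.2))
    (i j : ℕ) (hi : i ≤ k - 1) (hj : j ≤ k - 1)
    (S : Set (ZMod (ℓ ^ k) × ZMod (ℓ ^ k)))
    (hS : S = {p | addOrderOf p.1 = ℓ ^ (i + 1) ∧ addOrderOf p.2 = ℓ ^ (j + 1)})
    (ρ ν : ℕ) (hρ : ρ = max 0 (max ((i + 1) - α) ((j + 1) - β)))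
    (hν : ν = min (i + j) (min (i + β - 1) (j + α - 1))) :
    (∀ p ∈ S, σ p ∈ S)
    ∧ (∀ p ∈ S, Nat.card (MulAction.orbit (Subgroup.zpowers σ) p) = ℓ ^ ρ)
    ∧ Nat.card {ω : MulAction.orbitRel.Quotient (Subgroup.zpowers σ)
          (ZMod (ℓ ^ k) × ZMod (ℓ ^ k)) //
        ∃ p ∈ S, Quotient.mk (MulAction.orbitRel (Subgroup.zpowers σ) _) p = ω}
        = (ℓ - 1) ^ 2 * ℓ ^ ν
    ∧ ν = i + j - ρ := by
  classical
  have hℓp : Nat.Prime ℓ := Fact.out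
  haveI : NeZero (ℓ ^ k) := ⟨pow_ne_zero k hℓp.ne_zero⟩
  have hik : i + 1 ≤ k := by omega
  have hjk : j + 1 ≤ k := by omega
  have hα1 : 1 ≤ α := by
    have hne : lam - 1 ≠ 0 := sub_ne_zero.mpr hlne
    have := (aux_dvd_iff_le_val (lam - 1) hne 1).mp (by simpa using hlam)
    have hv := Nat.zero_le (lam - 1).valuation
    omega
  have hβ1 : 1 ≤ β := by
    have hne : mu - 1 ≠ 0 := sub_ne_zero.mpr hmne
    have := (aux_dvd_iff_le_val (mu - 1) hne 1).mp (by simpa using hmu)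
    have hv := Nat.zero_le (mu - 1).valuation
    omega
  set a := PadicInt.toZModPow (p := ℓ) k lam with hadef
  set b := PadicInt.toZModPow (p := ℓ) k mu with hbdef
  have hau : IsUnit a := aux_isUnit_toZMod hlam k
  have hbu : IsUnit b := aux_isUnit_toZMod hmu k
  -- stability
  have stab : ∀ p ∈ S, σ p ∈ S := by
    intro p hp
    rw [hS] at hp ⊢
    rw [hσ]
    exact ⟨by rw [aux_unit_mul_order _ _ hau]; exact hp.1,
           by rw [aux_unit_mul_order _ _ hbu]; exact hp.2⟩
  -- iterates of σ
  have hpow : ∀ (n : ℕ) (p : ZMod (ℓ ^ k) × ZMod (ℓ ^ k)),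
      (σ ^ n) p = (a ^ n * p.1, b ^ n * p.2) := by
    intro n
    induction n with
    | zero => intro p; simp
    | succ n ih =>
      intro p
      rw [pow_succ', Equiv.Perm.mul_apply, hσ, ih]
      simp only [pow_succ']
      rw [Prod.mk.injEq]
      exact ⟨by ring, by ring⟩
  -- fixed point criterion
  have hρ' : ρ = max ((i + 1) - α) ((j + 1) - β) := by omega
  have hfix : ∀ p ∈ S, ∀ n : ℕ, ((σ ^ n) p = p ↔ ℓ ^ ρ ∣ n) := by
    intro p hp n
    rw [hS] at hp
    obtain ⟨hx, hy⟩ := hp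
    have key : ∀ (c : ℤ_[ℓ]) (hc : (ℓ : ℤ_[ℓ]) ∣ c - 1) (hc1 : c ≠ 1) (γ : ℕ)
        (hγ : γ = (c - 1).valuation) (t : ℕ) (ht : t + 1 ≤ k)
        (z : ZMod (ℓ ^ k)) (hz : addOrderOf z = ℓ ^ (t + 1)),
        ((PadicInt.toZModPow k c) ^ n * z = z ↔ ℓ ^ ((t + 1) - γ) ∣ n) := by
      intro c hc hc1 γ hγ t ht z hz
      have h1 : (PadicInt.toZModPow k c) ^ n * z = z ↔
          (PadicInt.toZModPow k (c ^ n - 1)) * z = 0 := by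
        rw [map_sub, map_pow, map_one, sub_one_mul, sub_eq_zero]
      rw [h1, aux_ann ht _ z hz, aux_lte hodd hc hc1 γ hγ]
    have hxiff := key lam hlam hlne α hα i hik p.1 hx
    have hyiff := key mu hmu hmne β hβ j hjk p.2 hy
    rw [hpow, Prod.ext_iff]
    simp only [hadef, hbdef, hxiff, hyiff]
    rw [hρ']
    constructor
    · rintro ⟨h1, h2⟩
      rcases max_cases ((i + 1) - α) ((j + 1) - β) with ⟨hm, _⟩ | ⟨hm, _⟩ <;> rw [hm]
      · exact h1
      · exact h2
    · intro h
      exact ⟨(pow_dvd_pow ℓ (le_max_left _ _)).trans h,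
             (pow_dvd_pow ℓ (le_max_right _ _)).trans h⟩
  -- orbit cardinality
  have horb : ∀ p ∈ S, Nat.card (MulAction.orbit (Subgroup.zpowers σ) p) = ℓ ^ ρ := by
    intro p hp
    rw [Nat.card_congr (MulAction.orbitZPowersEquiv σ p), Nat.card_zmod]
    have hiter : ∀ n : ℕ, Function.IsPeriodicPt (σ • ·) n p ↔ ℓ ^ ρ ∣ n := by
      intro n
      rw [show Function.IsPeriodicPt (σ • ·) n p ↔ (σ • ·)^[n] p = p from Iff.rfl,
        smul_iterate]
      exact hfix p hp n
    refine Nat.dvd_antisymm ?_ ?_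
    · exact Function.IsPeriodicPt.minimalPeriod_dvd ((hiter _).mpr dvd_rfl)
    · exact (hiter _).mp (Function.isPeriodicPt_minimalPeriod _ _)
  refine ⟨stab, horb, ?_, by omega⟩
  -- orbit invariance of S
  have hstep : ∀ q, q ∈ S ↔ σ q ∈ S := by
    intro q
    simp only [hS, hσ, Set.mem_setOf_eq, aux_unit_mul_order _ _ hau,
      aux_unit_mul_order _ _ hbu]
  have hstepn : ∀ (n : ℕ) (q), ((σ ^ n) q ∈ S ↔ q ∈ S) := by
    intro n
    induction n with
    | zero => intro q; simp
    | succ n ih =>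
      intro q
      rw [pow_succ, Equiv.Perm.mul_apply, ih, ← hstep]
  have hSorb : ∀ p₀ ∈ S, ∀ z ∈ MulAction.orbit (Subgroup.zpowers σ) p₀, z ∈ S := by
    intro p₀ hp₀ z hz
    obtain ⟨⟨g, hg⟩, rfl⟩ := hz
    obtain ⟨m, rfl⟩ := Subgroup.mem_zpowers_iff.mp hg
    show (σ ^ m) p₀ ∈ S
    obtain ⟨n, rfl | rfl⟩ := m.eq_nat_or_neg
    · rw [zpow_natCast]
      exact (hstepn n p₀).mpr hp₀
    · rw [zpow_neg, zpow_natCast]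
      have happ : (σ ^ n) ((σ ^ n)⁻¹ p₀) = p₀ := Equiv.apply_symm_apply (σ ^ n) p₀
      exact (hstepn n ((σ ^ n)⁻¹ p₀)).mp (by rw [happ]; exact hp₀)
  -- cardinality of S
  have cardOrd : ∀ t : ℕ, t + 1 ≤ k →
      Nat.card {x : ZMod (ℓ ^ k) | addOrderOf x = ℓ ^ (t + 1)} = ℓ ^ t * (ℓ - 1) := by
    intro t ht
    have hdvd : ℓ ^ (t + 1) ∣ Fintype.card (ZMod (ℓ ^ k)) := by
      rw [ZMod.card]; exact pow_dvd_pow ℓ ht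
    have htot := IsAddCyclic.card_addOrderOf_eq_totient (α := ZMod (ℓ ^ k))
      (d := ℓ ^ (t + 1)) hdvd
    have : Nat.card {x : ZMod (ℓ ^ k) | addOrderOf x = ℓ ^ (t + 1)} =
        (ℓ ^ (t + 1)).totient := by
      rw [Nat.card_eq_fintype_card]
      rw [← htot]
      apply Fintype.card_of_finset' _ (by simp)
    rw [this, Nat.totient_prime_pow hℓp (Nat.succ_pos t)]
    simp
  have hSprod : S = {x : ZMod (ℓ ^ k) | addOrderOf x = ℓ ^ (i + 1)} ×ˢ
      {y : ZMod (ℓ ^ k) | addOrderOf y = ℓ ^ (j + 1)} := by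
    rw [hS]; ext p; simp [Set.mem_prod]
  have hcardS : Nat.card ↥S = (ℓ - 1) ^ 2 * ℓ ^ (i + j) := by
    rw [hSprod, Nat.card_congr (Equiv.Set.prod _ _), Nat.card_prod,
      cardOrd i hik, cardOrd j hjk, pow_add]
    ring
  -- orbit counting
  set T := {ω : MulAction.orbitRel.Quotient (Subgroup.zpowers σ)
      (ZMod (ℓ ^ k) × ZMod (ℓ ^ k)) //
    ∃ p ∈ S, Quotient.mk (MulAction.orbitRel (Subgroup.zpowers σ) _) p = ω} with hT
  let q : ↥S → T := fun s =>
    ⟨Quotient.mk (MulAction.orbitRel (Subgroup.zpowers σ) _) s.1, s.1, s.2, rfl⟩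
  have hfib : ∀ t : T, Nat.card {s : ↥S // q s = t} = ℓ ^ ρ := by
    rintro ⟨ω, hω⟩
    obtain ⟨p₀, hp₀S, hp₀⟩ := hω
    refine (Nat.card_congr ?_).trans (horb p₀ hp₀S)
    refine ⟨fun s => ⟨s.1.1, ?_⟩, fun z => ⟨⟨z.1, hSorb p₀ hp₀S z.1 z.2⟩, ?_⟩, ?_, ?_⟩
    · have h1 : Quotient.mk (MulAction.orbitRel (Subgroup.zpowers σ) _) s.1.1 = ω := by
        have := s.2
        rw [Subtype.ext_iff] at this
        exact this
      exact MulAction.orbitRel_apply.mp (Quotient.exact (h1.trans hp₀.symm))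
    · apply Subtype.ext
      show Quotient.mk (MulAction.orbitRel (Subgroup.zpowers σ) _) z.1 = ω
      rw [← hp₀]
      exact Quotient.sound (MulAction.orbitRel_apply.mpr z.2)
    · intro s; apply Subtype.ext; apply Subtype.ext; rfl
    · intro z; apply Subtype.ext; rfl
  have key : Nat.card ↥S = Nat.card T * ℓ ^ ρ := by
    rw [Nat.card_congr (Equiv.sigmaFiberEquiv q).symm]
    rw [Nat.card_eq_fintype_card, Fintype.card_sigma]
    have : ∀ t : T, Fintype.card {s : ↥S // q s = t} = ℓ ^ ρ := by
      intro t
      rw [← Nat.card_eq_fintype_card]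
      exact hfib t
    simp only [this]
    rw [Finset.sum_const, Finset.card_univ, smul_eq_mul, Nat.card_eq_fintype_card]
  have hνρ : ν + ρ = i + j := by omega
  have : Nat.card T * ℓ ^ ρ = ((ℓ - 1) ^ 2 * ℓ ^ ν) * ℓ ^ ρ := by
    rw [← key, hcardS, mul_assoc, ← pow_add, hνρ]
  exact Nat.eq_of_mul_eq_mul_right (pow_pos hℓp.pos ρ) this
end

section
/- Let ℓ be an odd prime, λ ∈ ℤ_ℓ with λ ≡ 1 (mod ℓ) and λ ≠ 1, and set α = v_ℓ(λ − 1) ≥ 1. Fix k ≥ 1. For each integer 0 ≤ i ≤ k − 1, the set of elements x ∈ ℤ/ℓ^kℤ of additive order exactly ℓ^{i+1} is stable under multiplication by λ; every orbit of the cyclic group generated by multiplication by λ contained in this set has cardinality ℓ^{max(0, i − α + 1)}, and the number of such orbits is (ℓ−1)·ℓ^{min(i, α−1)}. -/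
open PadicInt

variable {ℓ : ℕ} [Fact (Nat.Prime ℓ)]

lemma stmt11_isUnit_iff_not_dvd {u : ℤ_[ℓ]} : IsUnit u ↔ ¬ (ℓ : ℤ_[ℓ]) ∣ u := by
  rw [← PadicInt.norm_lt_one_iff_dvd, PadicInt.isUnit_iff]
  constructor
  · intro h; simp [h]
  · intro h; exact le_antisymm (PadicInt.norm_le_one u) (not_lt.mp h)

lemma stmt11_unit_add {u : ℤ_[ℓ]} (hu : IsUnit u) (z : ℤ_[ℓ]) :
    IsUnit (u + ℓ * z) := by
  rw [stmt11_isUnit_iff_not_dvd] at hu ⊢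
  intro ⟨c, hc⟩
  exact hu ⟨c - z, by rw [mul_sub, ← hc]; ring⟩

lemma stmt11_nat_unit {t : ℕ} (ht : ¬ ℓ ∣ t) : IsUnit (t : ℤ_[ℓ]) := by
  rw [stmt11_isUnit_iff_not_dvd, ← PadicInt.norm_lt_one_iff_dvd]
  have : ¬ ((ℓ : ℤ) ∣ (t : ℤ)) := by exact_mod_cast ht
  rw [show ((t : ℤ_[ℓ])) = ((t : ℤ) : ℤ_[ℓ]) by push_cast; ring]
  rw [PadicInt.norm_int_lt_one_iff_dvd]
  exact this

lemma stmt11_bin (x : ℤ_[ℓ]) (n : ℕ) :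
    ∃ w, (1 + x) ^ n = 1 + n * x + (n.choose 2) * x ^ 2 + x ^ 3 * w := by
  induction n with
  | zero => exact ⟨0, by simp⟩
  | succ n ih =>
    obtain ⟨w, hw⟩ := ih
    refine ⟨(n.choose 2 : ℤ_[ℓ]) + w + w * x, ?_⟩
    rw [pow_succ, hw, Nat.choose_succ_succ, Nat.choose_one_right]
    push_cast
    ring

lemma stmt11_geo (μ : ℤ_[ℓ]) (t : ℕ) :
    ∃ w, (∑ j ∈ Finset.range t, μ ^ j) = t + (μ - 1) * w := by
  induction t with
  | zero => exact ⟨0, by simp⟩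
  | succ t ih =>
    obtain ⟨w, hw⟩ := ih
    refine ⟨w + ∑ j ∈ Finset.range t, μ ^ j, ?_⟩
    rw [Finset.sum_range_succ]
    push_cast
    linear_combination hw - geom_sum_mul μ t

lemma stmt11_Kp (hodd : ℓ ≠ 2) {μ u : ℤ_[ℓ]} {b : ℕ} (hu : IsUnit u)
    (h : μ = 1 + (ℓ : ℤ_[ℓ]) ^ (b + 1) * u) :
    ∃ v, IsUnit v ∧ μ ^ ℓ = 1 + (ℓ : ℤ_[ℓ]) ^ (b + 2) * v := by
  have hp : Nat.Prime ℓ := Fact.out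
  have h2ℓ : 2 < ℓ := lt_of_le_of_ne hp.two_le (Ne.symm hodd)
  obtain ⟨c, hc⟩ := (Nat.Prime.dvd_choose_self hp (by norm_num) h2ℓ : ℓ ∣ ℓ.choose 2)
  obtain ⟨w, hw⟩ := stmt11_bin ((ℓ : ℤ_[ℓ]) ^ (b + 1) * u) ℓ
  refine ⟨u + ℓ * ((c : ℤ_[ℓ]) * (ℓ : ℤ_[ℓ]) ^ b * u ^ 2
      + (ℓ : ℤ_[ℓ]) ^ (2 * b) * u ^ 3 * w), stmt11_unit_add hu _, ?_⟩
  rw [h, hw, hc]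
  push_cast
  ring

lemma stmt11_Kt {μ u : ℤ_[ℓ]} {b : ℕ} (hu : IsUnit u)
    (h : μ = 1 + (ℓ : ℤ_[ℓ]) ^ (b + 1) * u) {t : ℕ} (ht : ¬ ℓ ∣ t) :
    ∃ v, IsUnit v ∧ μ ^ t = 1 + (ℓ : ℤ_[ℓ]) ^ (b + 1) * v := by
  obtain ⟨w, hw⟩ := stmt11_geo μ t
  refine ⟨u * ((t : ℤ_[ℓ]) + ℓ * ((ℓ : ℤ_[ℓ]) ^ b * u * w)), ?_, ?_⟩
  · exact hu.mul (stmt11_unit_add (stmt11_nat_unit ht) _)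
  · have h1 : (∑ j ∈ Finset.range t, μ ^ j) * (μ - 1) = μ ^ t - 1 := geom_sum_mul μ t
    rw [hw] at h1
    have h2 : μ - 1 = (ℓ : ℤ_[ℓ]) ^ (b + 1) * u := by rw [h]; ring
    rw [h2] at h1
    linear_combination -h1

lemma stmt11_key (hodd : ℓ ≠ 2) {lam u : ℤ_[ℓ]} {b : ℕ} (hu : IsUnit u)
    (h : lam = 1 + (ℓ : ℤ_[ℓ]) ^ (b + 1) * u) (m : ℕ) :
    ∃ v, IsUnit v ∧ lam ^ (ℓ ^ m) = 1 + (ℓ : ℤ_[ℓ]) ^ (b + m + 1) * v := by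
  induction m with
  | zero => exact ⟨u, hu, by simpa using h⟩
  | succ m ih =>
    obtain ⟨v, hv, hv2⟩ := ih
    obtain ⟨v', hv', hv'2⟩ := stmt11_Kp hodd (b := b + m) hv hv2
    exact ⟨v', hv', by rw [pow_succ, pow_mul]; exact hv'2⟩

lemma stmt11_key2 (hodd : ℓ ≠ 2) {lam u : ℤ_[ℓ]} {b : ℕ} (hu : IsUnit u)
    (h : lam = 1 + (ℓ : ℤ_[ℓ]) ^ (b + 1) * u) {n : ℕ} (hn : n ≠ 0) :
    ∃ v, IsUnit v ∧ lam ^ n = 1 + (ℓ : ℤ_[ℓ]) ^ (b + 1 + n.factorization ℓ) * v := by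
  have hp : Nat.Prime ℓ := Fact.out
  obtain ⟨v, hv, hv2⟩ := stmt11_key hodd hu h (n.factorization ℓ)
  have ht : ¬ ℓ ∣ (n / ℓ ^ n.factorization ℓ) := Nat.not_dvd_ordCompl hp hn
  obtain ⟨v', hv', hv'2⟩ := stmt11_Kt (b := b + n.factorization ℓ) hv hv2 ht
  refine ⟨v', hv', ?_⟩
  have heq : b + 1 + n.factorization ℓ = b + n.factorization ℓ + 1 := by omega
  rw [heq]
  calc lam ^ n = (lam ^ (ℓ ^ n.factorization ℓ)) ^ (n / ℓ ^ n.factorization ℓ) := by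
        rw [← pow_mul, Nat.ordProj_mul_ordCompl_eq_self n ℓ]
    _ = 1 + (ℓ : ℤ_[ℓ]) ^ (b + n.factorization ℓ + 1) * v' := hv'2

lemma stmt11_dvd_iff {v : ℤ_[ℓ]} (hv : IsUnit v) (s j : ℕ) :
    (ℓ : ℤ_[ℓ]) ^ j ∣ (ℓ : ℤ_[ℓ]) ^ s * v ↔ j ≤ s := by
  have hp : Nat.Prime ℓ := Fact.out
  have h1 : (1 : ℝ) < ℓ := by exact_mod_cast hp.one_lt
  constructor
  · intro hd
    have hmem : (ℓ : ℤ_[ℓ]) ^ s * v ∈ Ideal.span {(ℓ : ℤ_[ℓ]) ^ j} :=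
      Ideal.mem_span_singleton.mpr hd
    have hnorm : ‖(ℓ : ℤ_[ℓ]) ^ s * v‖ ≤ (ℓ : ℝ) ^ (-(j : ℤ)) :=
      (PadicInt.norm_le_pow_iff_mem_span_pow _ j).mpr hmem
    rw [norm_mul, PadicInt.isUnit_iff.mp hv, mul_one, PadicInt.norm_p_pow] at hnorm
    have := (zpow_le_zpow_iff_right₀ h1).mp hnorm
    omega
  · intro hj
    exact Dvd.dvd.mul_right (pow_dvd_pow _ hj) v

lemma stmt11_bridge {j k : ℕ} (hjk : j ≤ k) (z : ℤ_[ℓ]) :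
    ℓ ^ j ∣ (PadicInt.toZModPow k z).val ↔ (ℓ : ℤ_[ℓ]) ^ j ∣ z := by
  have hp : Nat.Prime ℓ := Fact.out
  haveI : NeZero (ℓ ^ k) := ⟨pow_ne_zero _ hp.pos.ne'⟩
  rw [← ZMod.natCast_eq_zero_iff]
  rw [ZMod.natCast_val]
  rw [show (ZMod.cast (PadicInt.toZModPow k z) : ZMod (ℓ ^ j)) = PadicInt.toZModPow j z from
    PadicInt.cast_toZModPow j k hjk z]
  rw [show ((PadicInt.toZModPow j z = 0) ↔ z ∈ RingHom.ker (PadicInt.toZModPow (p := ℓ) j)) from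
    RingHom.mem_ker.symm]
  rw [PadicInt.ker_toZModPow, Ideal.mem_span_singleton]

lemma stmt11_mul_eq_zero_iff {n : ℕ} [NeZero n] (w x : ZMod n) :
    w * x = 0 ↔ addOrderOf x ∣ w.val := by
  conv_lhs => rw [show w = (w.val : ZMod n) by rw [ZMod.natCast_val, ZMod.cast_id]]
  rw [← nsmul_eq_mul]
  exact (addOrderOf_dvd_iff_nsmul_eq_zero).symm

/-- Let `ℓ` be an odd prime, `λ ∈ ℤ_ℓ` with `λ ≡ 1 (mod ℓ)`, `λ ≠ 1`,
`α = v_ℓ(λ-1) ≥ 1`.  Fix `k ≥ 1`.  For `0 ≤ i ≤ k-1`, the set of elements of `ℤ/ℓ^kℤ` of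
additive order exactly `ℓ^(i+1)` is stable under multiplication by `λ`; each orbit of the
cyclic group generated by multiplication by `λ` inside this set has cardinality
`ℓ^max(0, i-α+1)`, and the number of such orbits is `(ℓ-1)·ℓ^min(i, α-1)`. -/
theorem stmt11 (ℓ : ℕ) [Fact (Nat.Prime ℓ)] (hodd : ℓ ≠ 2)
    (lam : ℤ_[ℓ]) (hlam : (ℓ : ℤ_[ℓ]) ∣ (lam - 1)) (hne : lam ≠ 1)
    (α : ℕ) (hα : α = (lam - 1).valuation)
    (k : ℕ) (hk : 1 ≤ k)
    (σ : Equiv.Perm (ZMod (ℓ ^ k)))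
    (hσ : ∀ x : ZMod (ℓ ^ k), σ x = PadicInt.toZModPow k lam * x)
    (i : ℕ) (hi : i ≤ k - 1)
    (S : Set (ZMod (ℓ ^ k))) (hS : S = {x | addOrderOf x = ℓ ^ (i + 1)}) :
    (∀ x ∈ S, σ x ∈ S)
    ∧ (∀ x ∈ S, Nat.card (MulAction.orbit (Subgroup.zpowers σ) x)
        = ℓ ^ (max 0 ((i + 1) - α)))
    ∧ Nat.card {ω : MulAction.orbitRel.Quotient (Subgroup.zpowers σ) (ZMod (ℓ ^ k)) //
        ∃ x ∈ S, Quotient.mk (MulAction.orbitRel (Subgroup.zpowers σ) _) x = ω}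
        = (ℓ - 1) * ℓ ^ (min i (α - 1)) := by
  classical
  have hp : Nat.Prime ℓ := Fact.out
  haveI : NeZero (ℓ ^ k) := ⟨pow_ne_zero _ hp.pos.ne'⟩
  have hx0 : lam - 1 ≠ 0 := sub_ne_zero.mpr hne
  set u : ℤ_[ℓ] := (PadicInt.unitCoeff hx0 : ℤ_[ℓ]) with hudef
  have huu : IsUnit u := (PadicInt.unitCoeff hx0).isUnit
  have hspec : lam - 1 = (ℓ : ℤ_[ℓ]) ^ α * u := by
    rw [hα]; exact (PadicInt.unitCoeff_spec hx0).trans (mul_comm _ _)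
  have hα1 : 1 ≤ α := by
    by_contra hcon
    have h0 : α = 0 := by omega
    rw [h0, pow_zero, one_mul] at hspec
    rw [stmt11_isUnit_iff_not_dvd] at huu
    exact huu (hspec ▸ hlam)
  obtain ⟨b, hb⟩ : ∃ b, α = b + 1 := ⟨α - 1, by omega⟩
  have hlamform : lam = 1 + (ℓ : ℤ_[ℓ]) ^ (b + 1) * u := by
    rw [← hb]; linear_combination hspec
  have hik : i + 1 ≤ k := by omega
  have hlamu : IsUnit lam := by
    rw [stmt11_isUnit_iff_not_dvd]
    intro hdvd
    have h1 : (ℓ : ℤ_[ℓ]) ∣ 1 := by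
      have := dvd_sub hdvd hlam
      simpa using this
    exact (PadicInt.prime_p (p := ℓ)).not_unit (isUnit_of_dvd_one h1)
  set c : ZMod (ℓ ^ k) := PadicInt.toZModPow k lam with hc
  have hcu : IsUnit c := hlamu.map _
  have horder : ∀ y : ZMod (ℓ ^ k), addOrderOf (σ y) = addOrderOf y := by
    intro y
    rw [hσ y]
    have := addOrderOf_injective (AddMonoidHom.mulLeft c) hcu.mul_right_injective y
    simpa using this
  have hstab : ∀ x ∈ S, σ x ∈ S := by
    intro x hx
    rw [hS] at hx ⊢
    simp only [Set.mem_setOf_eq] at hx ⊢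
    rw [horder x]; exact hx
  have horderpow : ∀ (m : ℕ) (y : ZMod (ℓ ^ k)), addOrderOf ((σ ^ m) y) = addOrderOf y := by
    intro m
    induction m with
    | zero => intro y; simp
    | succ m ih => intro y; rw [pow_succ, Equiv.Perm.mul_apply, ih (σ y), horder]
  have horderz : ∀ (z : ℤ) (y : ZMod (ℓ ^ k)), addOrderOf ((σ ^ z) y) = addOrderOf y := by
    intro z y
    cases z with
    | ofNat m => rw [Int.ofNat_eq_coe, zpow_natCast]; exact horderpow m y
    | negSucc m =>
      rw [zpow_negSucc]
      have h2 := horderpow (m + 1) ((σ ^ (m + 1))⁻¹ y)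
      rw [← Equiv.Perm.mul_apply, mul_inv_cancel, Equiv.Perm.one_apply] at h2
      exact h2.symm
  have horbS : ∀ x ∈ S, ∀ y ∈ MulAction.orbit (Subgroup.zpowers σ) x, y ∈ S := by
    intro x hx y hy
    obtain ⟨g, rfl⟩ := MulAction.mem_orbit_iff.mp hy
    obtain ⟨z, hz⟩ := Subgroup.mem_zpowers_iff.mp g.2
    rw [hS] at hx ⊢
    simp only [Set.mem_setOf_eq] at hx ⊢
    rw [show g • x = ((g : Equiv.Perm (ZMod (ℓ ^ k))) x) from rfl, ← hz, horderz z x]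
    exact hx
  have hiter : ∀ (m : ℕ) (y : ZMod (ℓ ^ k)), (⇑σ)^[m] y = c ^ m * y := by
    intro m
    induction m with
    | zero => intro y; simp
    | succ m ih =>
      intro y
      rw [Function.iterate_succ_apply', ih y, hσ, pow_succ]
      ring
  have hperiod : ∀ x ∈ S, ∀ m : ℕ, ((⇑σ)^[m] x = x ↔ ℓ ^ ((i + 1) - α) ∣ m) := by
    intro x hx m
    rw [hS] at hx
    simp only [Set.mem_setOf_eq] at hx
    rcases Nat.eq_zero_or_pos m with rfl | hm
    · simp
    have hm0 : m ≠ 0 := hm.ne'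
    rw [hiter m x]
    rw [show (c ^ m * x = x) ↔ ((c ^ m - 1) * x = 0) from by
      rw [sub_mul, one_mul, sub_eq_zero]]
    rw [stmt11_mul_eq_zero_iff (c ^ m - 1) x, hx]
    rw [show (c ^ m - 1 : ZMod (ℓ ^ k)) = PadicInt.toZModPow k (lam ^ m - 1) by
      rw [hc]; simp [map_sub, map_pow, map_one]]
    rw [stmt11_bridge hik (lam ^ m - 1)]
    obtain ⟨v, hv, hv2⟩ := stmt11_key2 hodd huu hlamform hm0
    rw [show lam ^ m - 1 = (ℓ : ℤ_[ℓ]) ^ (b + 1 + m.factorization ℓ) * v from by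
      rw [hv2]; ring]
    rw [stmt11_dvd_iff hv _ _]
    rw [hp.pow_dvd_iff_le_factorization hm0]
    omega
  have hmp : ∀ x ∈ S, Function.minimalPeriod (fun y => σ • y) x = ℓ ^ ((i + 1) - α) := by
    intro x hx
    apply Nat.dvd_antisymm
    · exact Function.IsPeriodicPt.minimalPeriod_dvd ((hperiod x hx _).mpr dvd_rfl)
    · exact (hperiod x hx _).mp (Function.isPeriodicPt_minimalPeriod _ _)
  have hcard_orbit : ∀ x ∈ S, Nat.card (MulAction.orbit (Subgroup.zpowers σ) x)
      = ℓ ^ ((i + 1) - α) := by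
    intro x hx
    rw [Nat.card_congr (MulAction.orbitZPowersEquiv σ x), Nat.card_zmod, hmp x hx]
  refine ⟨hstab, fun x hx => by rw [hcard_orbit x hx, Nat.zero_max], ?_⟩
  -- counting
  have hScard : Nat.card S = ℓ ^ i * (ℓ - 1) := by
    have hdvd : (ℓ : ℕ) ^ (i + 1) ∣ Fintype.card (ZMod (ℓ ^ k)) := by
      rw [ZMod.card]; exact pow_dvd_pow ℓ hik
    have htot := IsAddCyclic.card_addOrderOf_eq_totient (α := ZMod (ℓ ^ k))
      (d := ℓ ^ (i + 1)) hdvd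
    rw [Nat.totient_prime_pow hp (Nat.succ_pos i)] at htot
    rw [hS, Nat.card_eq_fintype_card, ← Set.toFinset_card, Set.toFinset_setOf]
    simpa using htot
  haveI : Fintype (MulAction.orbitRel.Quotient (Subgroup.zpowers σ) (ZMod (ℓ ^ k))) :=
    Quotient.fintype _
  let T := {ω : MulAction.orbitRel.Quotient (Subgroup.zpowers σ) (ZMod (ℓ ^ k)) //
      ∃ x ∈ S, Quotient.mk (MulAction.orbitRel (Subgroup.zpowers σ) (ZMod (ℓ ^ k))) x = ω}
  show Nat.card T = _
  let f : S → T := fun x => ⟨Quotient.mk _ x.1, x.1, x.2, rfl⟩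
  have hfiber : ∀ ω : T, Nat.card {x : S // f x = ω} = ℓ ^ ((i + 1) - α) := by
    rintro ⟨w, x₀, hx₀S, hx₀⟩
    have he : {x : S // f x = ⟨w, ⟨x₀, hx₀S, hx₀⟩⟩} ≃
        (MulAction.orbit (Subgroup.zpowers σ) x₀) :=
      { toFun := fun x => ⟨x.1.1, by
          have h1 : Quotient.mk (MulAction.orbitRel (Subgroup.zpowers σ) (ZMod (ℓ ^ k))) x.1.1
              = w := congrArg Subtype.val x.2
          exact MulAction.orbitRel_apply.mp (Quotient.exact (h1.trans hx₀.symm))⟩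
        invFun := fun y => ⟨⟨y.1, horbS x₀ hx₀S y.1 y.2⟩, by
          apply Subtype.ext
          show Quotient.mk (MulAction.orbitRel (Subgroup.zpowers σ) (ZMod (ℓ ^ k))) y.1 = w
          rw [← hx₀]
          exact Quotient.sound (MulAction.orbitRel_apply.mpr y.2)⟩
        left_inv := fun x => Subtype.ext (Subtype.ext rfl)
        right_inv := fun y => rfl }
    rw [Nat.card_congr he]
    exact hcard_orbit x₀ hx₀S
  have hcardeq : Nat.card S = Nat.card T * ℓ ^ ((i + 1) - α) := by
    rw [← Nat.card_congr (Equiv.sigmaFiberEquiv f)]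
    rw [Nat.card_eq_fintype_card, Fintype.card_sigma]
    have hfib' : ∀ ω : T, Fintype.card {x : S // f x = ω} = ℓ ^ ((i + 1) - α) := fun ω => by
      rw [← Nat.card_eq_fintype_card]; exact hfiber ω
    rw [Finset.sum_congr rfl fun ω _ => hfib' ω, Finset.sum_const, Finset.card_univ,
      smul_eq_mul, Nat.card_eq_fintype_card]
  have hNpos : 0 < ℓ ^ ((i + 1) - α) := pow_pos hp.pos _
  apply Nat.eq_of_mul_eq_mul_right hNpos
  rw [← hcardeq, hScard]
  rw [mul_assoc, ← pow_add]
  have hmin : min i (α - 1) + ((i + 1) - α) = i := by omega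
  rw [hmin]
  ring
end

section
/- Let λ, μ ∈ ℤ₂ with λ ≡ μ ≡ 1 (mod 4), λ ≠ 1, μ ≠ 1, and set α = v₂(λ − 1) ≥ 2, β = v₂(μ − 1) ≥ 2. Fix k ≥ 2 and let σ be the automorphism of (ℤ/2^kℤ)² given by (x, y) ↦ (λx, μy). For integers 0 ≤ i, j ≤ k − 2, the set S(i,j) of pairs (x, y) ∈ (ℤ/2^kℤ)² such that x has additive order exactly 2^{i+2} and y has additive order exactly 2^{j+2} is stable under σ; every orbit of ⟨σ⟩ contained in S(i,j) has cardinality 2^{ρ₂(i,j)} where ρ₂(i,j) = max(0, i − α + 2, j − β + 2), and the number of such orbits is 4·2^{ν₂(i,j)} where ν₂(i,j) = min(i + j, i + β − 2, j + α − 2) = i + j − ρ₂(i,j). -/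
lemma padic_isUnit_iff_not_dvd (z : ℤ_[2]) : IsUnit z ↔ ¬ (2:ℤ_[2]) ∣ z := by
  have h2 : ((2:ℕ):ℤ_[2]) = 2 := by norm_num
  rw [← h2, ← PadicInt.norm_lt_one_iff_dvd, PadicInt.isUnit_iff]
  have := PadicInt.norm_le_one z
  constructor
  · intro h; simp [h]
  · intro h
    rcases lt_or_eq_of_le this with h' | h'
    · exact absurd h' h
    · exact h'

lemma padic_two_prime_dvd (a b : ℕ) (u : ℤ_[2]) (hu : IsUnit u) :
    (2:ℤ_[2])^a ∣ 2^b * u ↔ a ≤ b := by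
  constructor
  · intro h
    by_contra hab
    push_neg at hab
    have h1 : (2:ℤ_[2])^b * 2 ∣ 2^b * u := by
      refine dvd_trans ?_ h
      calc (2:ℤ_[2])^b * 2 = 2^(b+1) := by ring
      _ ∣ 2^a := pow_dvd_pow 2 hab
    have h2 : (2:ℤ_[2]) ∣ u :=
      (mul_dvd_mul_iff_left (a := (2:ℤ_[2])^b) (pow_ne_zero b two_ne_zero)).mp h1
    exact (padic_isUnit_iff_not_dvd u).mp hu h2
  · intro h
    exact Dvd.dvd.mul_right (pow_dvd_pow 2 h) u

lemma padic_unit_one_add (a : ℕ) (ha : 1 ≤ a) (v : ℤ_[2]) : IsUnit (1 + 2^a * v) := by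
  rw [padic_isUnit_iff_not_dvd]
  intro hd
  have h2 : (2:ℤ_[2]) ∣ 2^a * v := Dvd.dvd.mul_right (dvd_pow_self 2 (by omega)) v
  have h1 : (2:ℤ_[2]) ∣ 1 := (dvd_add_right h2).mp (by rwa [add_comm] at hd)
  exact (padic_isUnit_iff_not_dvd 2).mp (isUnit_of_dvd_one h1) dvd_rfl

lemma padic_lte (lam u : ℤ_[2]) (hu : IsUnit u) (α : ℕ) (hα2 : 2 ≤ α)
    (h : lam = 1 + 2^α * u) (n : ℕ) (hn : n ≠ 0) :
    ∃ v : ℤ_[2], IsUnit v ∧ lam ^ n - 1 = 2^(α + padicValNat 2 n) * v := by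
  have hdvd1 : (2:ℤ_[2]) ∣ lam - 1 := by
    rw [h]; ring_nf
    exact Dvd.dvd.mul_left (dvd_pow_self 2 (by omega)) u
  have hpow2 : ∀ t : ℕ, (2:ℤ_[2]) ∣ lam ^ t - 1 := by
    intro t
    have := geom_sum_mul lam t
    have : lam ^ t - 1 = (∑ i ∈ Finset.range t, lam ^ i) * (lam - 1) := this.symm
    rw [this]
    exact Dvd.dvd.mul_left hdvd1 _
  have hodd : ∀ m : ℕ, ¬ 2 ∣ m → ∃ v : ℤ_[2], IsUnit v ∧ lam ^ m - 1 = 2^α * v := by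
    intro m hm
    set g := ∑ i ∈ Finset.range m, lam ^ i with hg
    have hgeq : lam ^ m - 1 = 2^α * (u * g) := by
      have := geom_sum_mul lam m
      have h1 : lam - 1 = 2^α * u := by rw [h]; ring
      calc lam ^ m - 1 = g * (lam - 1) := this.symm
      _ = 2^α * (u * g) := by rw [h1]; ring
    refine ⟨u * g, ?_, hgeq⟩
    refine hu.mul ?_
    rw [padic_isUnit_iff_not_dvd]
    intro hdg
    have hgm : (2:ℤ_[2]) ∣ g - m := by
      have : g - (m:ℤ_[2]) = ∑ i ∈ Finset.range m, (lam ^ i - 1) := by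
        rw [hg, Finset.sum_sub_distrib]
        simp
      rw [this]
      exact Finset.dvd_sum fun i _ => hpow2 i
    have hdm : (2:ℤ_[2]) ∣ (m:ℤ_[2]) := (dvd_sub_right hdg).mp hgm
    obtain ⟨t, ht⟩ : ∃ t, m = 2 * t + 1 := ⟨m / 2, by omega⟩
    rw [ht] at hdm
    push_cast at hdm
    have h1 : (2:ℤ_[2]) ∣ 1 := (dvd_add_right (dvd_mul_right (2:ℤ_[2]) (t:ℤ_[2]))).mp hdm
    exact (padic_isUnit_iff_not_dvd 2).mp (isUnit_of_dvd_one h1) dvd_rfl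
  have hmain : ∀ s : ℕ, ∀ m : ℕ, ¬ 2 ∣ m →
      ∃ v : ℤ_[2], IsUnit v ∧ lam ^ (2^s * m) - 1 = 2^(α + s) * v := by
    intro s
    induction s with
    | zero => intro m hm; simpa using hodd m hm
    | succ s ih =>
      intro m hm
      obtain ⟨v, hv, hveq⟩ := ih m hm
      set w := lam ^ (2^s * m) with hw
      have hpow : lam ^ (2^(s+1) * m) = w * w := by
        rw [hw, ← pow_add]
        ring_nf
      have hw1 : w = 1 + 2^(α+s) * v := by rw [← hveq]; ring
      obtain ⟨a, ha⟩ : ∃ a : ℕ, α + s = a + 1 := ⟨α + s - 1, by omega⟩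
      have hwp1 : w + 1 = 2 * (1 + 2^a * v) := by
        rw [hw1, ha]; ring
      have hunit2 : IsUnit (1 + 2^a * v) := padic_unit_one_add a (by omega) v
      refine ⟨v * (1 + 2^a * v), hv.mul hunit2, ?_⟩
      have : lam ^ (2^(s+1) * m) - 1 = (w - 1) * (w + 1) := by rw [hpow]; ring
      rw [this, hveq, hwp1]
      ring
  have hfac := Nat.ordProj_mul_ordCompl_eq_self n 2
  have hmodd : ¬ 2 ∣ (n / 2 ^ n.factorization 2) :=
    Nat.not_dvd_ordCompl Nat.prime_two hn
  obtain ⟨v, hv, hveq⟩ := hmain (n.factorization 2) _ hmodd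
  rw [hfac] at hveq
  refine ⟨v, hv, ?_⟩
  rwa [Nat.factorization_def n Nat.prime_two] at hveq

lemma zmod_key (k t : ℕ) (ht : t ≤ k) (z : ℤ_[2]) (x : ZMod (2^k)) (hx : addOrderOf x = 2^t) :
    (PadicInt.toZModPow k z) * x = 0 ↔ (2:ℤ_[2])^t ∣ z := by
  haveI : NeZero (2^k) := ⟨pow_ne_zero k two_ne_zero⟩
  haveI : NeZero (2^t) := ⟨pow_ne_zero t two_ne_zero⟩
  set c := PadicInt.toZModPow k z with hc
  have h1 : c * x = c.val • x := by
    rw [nsmul_eq_mul]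
    congr 1
    rw [ZMod.natCast_val, ZMod.cast_id]
  rw [h1, ← addOrderOf_dvd_iff_nsmul_eq_zero, hx]
  rw [← ZMod.natCast_eq_zero_iff c.val (2^t)]
  have h2 : ((c.val : ZMod (2^t))) = PadicInt.toZModPow t z := by
    have h3 := PadicInt.zmod_cast_comp_toZModPow (p := 2) t k ht
    have h4 : ZMod.castHom (pow_dvd_pow 2 ht) (ZMod (2^t)) c = PadicInt.toZModPow t z := by
      rw [← h3]; rfl
    rw [← h4, ZMod.castHom_apply, ZMod.natCast_val]
  rw [h2, ← RingHom.mem_ker, PadicInt.ker_toZModPow, Ideal.mem_span_singleton]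
  norm_num

lemma card_addOrderOf_zmod (k t : ℕ) (ht : t ≤ k) (h1 : 1 ≤ t) :
    Nat.card {x : ZMod (2^k) // addOrderOf x = 2^t} = 2^(t-1) := by
  haveI : NeZero (2^k) := ⟨pow_ne_zero k two_ne_zero⟩
  classical
  rw [Nat.card_eq_fintype_card, Fintype.card_subtype]
  have hd : 2^t ∣ Fintype.card (ZMod (2^k)) := by
    rw [ZMod.card]; exact pow_dvd_pow 2 ht
  rw [IsAddCyclic.card_addOrderOf_eq_totient hd]
  rw [Nat.totient_prime_pow Nat.prime_two (by omega)]
  simp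

/-- Let `λ, μ ∈ ℤ₂` with `λ ≡ μ ≡ 1 (mod 4)`, `λ ≠ 1`, `μ ≠ 1`,
`α = v₂(λ-1) ≥ 2`, `β = v₂(μ-1) ≥ 2`.  Fix `k ≥ 2` and let `σ` be the automorphism
`(x, y) ↦ (λx, μy)` of `(ℤ/2^kℤ)²`.  For `0 ≤ i, j ≤ k-2`, the set `S(i,j)` of pairs whose
coordinates have additive orders exactly `2^(i+2)` and `2^(j+2)` is stable under `σ`; each
orbit of `⟨σ⟩` inside `S(i,j)` has cardinality `2^ρ₂(i,j)` with
`ρ₂(i,j) = max(0, i-α+2, j-β+2)`, and the number of such orbits is `4·2^ν₂(i,j)` with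
`ν₂(i,j) = min(i+j, i+β-2, j+α-2) = i+j-ρ₂(i,j)`. -/
theorem stmt12 (lam mu : ℤ_[2])
    (hlam : (4 : ℤ_[2]) ∣ (lam - 1)) (hmu : (4 : ℤ_[2]) ∣ (mu - 1))
    (hlne : lam ≠ 1) (hmne : mu ≠ 1)
    (α β : ℕ) (hα : α = (lam - 1).valuation) (hβ : β = (mu - 1).valuation)
    (k : ℕ) (hk : 2 ≤ k)
    (σ : Equiv.Perm (ZMod (2 ^ k) × ZMod (2 ^ k)))
    (hσ : ∀ p : ZMod (2 ^ k) × ZMod (2 ^ k),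
      σ p = (PadicInt.toZModPow k lam * p.1, PadicInt.toZModPow k mu * p.2))
    (i j : ℕ) (hi : i ≤ k - 2) (hj : j ≤ k - 2)
    (S : Set (ZMod (2 ^ k) × ZMod (2 ^ k)))
    (hS : S = {p | addOrderOf p.1 = 2 ^ (i + 2) ∧ addOrderOf p.2 = 2 ^ (j + 2)})
    (ρ ν : ℕ) (hρ : ρ = max 0 (max ((i + 2) - α) ((j + 2) - β)))
    (hν : ν = min (i + j) (min (i + β - 2) (j + α - 2))) :
    (∀ p ∈ S, σ p ∈ S)
    ∧ (∀ p ∈ S, Nat.card (MulAction.orbit (Subgroup.zpowers σ) p) = 2 ^ ρ)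
    ∧ Nat.card {ω : MulAction.orbitRel.Quotient (Subgroup.zpowers σ)
          (ZMod (2 ^ k) × ZMod (2 ^ k)) //
        ∃ p ∈ S, Quotient.mk (MulAction.orbitRel (Subgroup.zpowers σ) _) p = ω}
        = 4 * 2 ^ ν
    ∧ ν = i + j - ρ := by
  classical
  haveI : NeZero (2^k) := ⟨pow_ne_zero k two_ne_zero⟩
  have hik : i + 2 ≤ k := by omega
  have hjk : j + 2 ≤ k := by omega
  -- decompose lam and mu
  have hlne' : lam - 1 ≠ 0 := sub_ne_zero.mpr hlne
  have hmne' : mu - 1 ≠ 0 := sub_ne_zero.mpr hmne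
  set ul : ℤ_[2] := ((PadicInt.unitCoeff hlne' : ℤ_[2]ˣ) : ℤ_[2]) with hul
  set um : ℤ_[2] := ((PadicInt.unitCoeff hmne' : ℤ_[2]ˣ) : ℤ_[2]) with hum
  have hul_u : IsUnit ul := (PadicInt.unitCoeff hlne').isUnit
  have hum_u : IsUnit um := (PadicInt.unitCoeff hmne').isUnit
  have h2c : ((2:ℕ):ℤ_[2]) = 2 := by norm_num
  have hldec' : lam - 1 = 2^α * ul := by
    have h := PadicInt.unitCoeff_spec hlne'
    rw [← hα, h2c] at h
    linear_combination h
  have hmdec' : mu - 1 = 2^β * um := by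
    have h := PadicInt.unitCoeff_spec hmne'
    rw [← hβ, h2c] at h
    linear_combination h
  have hldec : lam = 1 + 2^α * ul := by linear_combination hldec'
  have hmdec : mu = 1 + 2^β * um := by linear_combination hmdec'
  have hα2 : 2 ≤ α := by
    have h4 : (2:ℤ_[2])^2 ∣ 2^α * ul := by
      rw [← hldec']
      have : (4:ℤ_[2]) = 2^2 := by norm_num
      rwa [this] at hlam
    exact (padic_two_prime_dvd 2 α ul hul_u).mp h4
  have hβ2 : 2 ≤ β := by
    have h4 : (2:ℤ_[2])^2 ∣ 2^β * um := by
      rw [← hmdec']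
      have : (4:ℤ_[2]) = 2^2 := by norm_num
      rwa [this] at hmu
    exact (padic_two_prime_dvd 2 β um hum_u).mp h4
  have hlam_unit : IsUnit lam := by
    rw [hldec]; exact padic_unit_one_add α (by omega) ul
  have hmu_unit : IsUnit mu := by
    rw [hmdec]; exact padic_unit_one_add β (by omega) um
  have hLu : IsUnit (PadicInt.toZModPow k lam) := hlam_unit.map _
  have hMu : IsUnit (PadicInt.toZModPow k mu) := hmu_unit.map _
  -- multiplication by a unit preserves additive orders
  have horder : ∀ (c : ZMod (2^k)), IsUnit c → ∀ (x : ZMod (2^k)),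
      addOrderOf (c * x) = addOrderOf x := by
    intro c hc x
    rw [addOrderOf_eq_addOrderOf_iff]
    intro n
    have h1 : n • (c * x) = c * (n • x) := by
      rw [nsmul_eq_mul, nsmul_eq_mul, mul_left_comm]
    rw [h1, hc.mul_right_eq_zero]
  -- stability of S
  have hstabS : ∀ p ∈ S, σ p ∈ S := by
    intro p hp
    rw [hS] at hp ⊢
    obtain ⟨hp1, hp2⟩ := hp
    rw [hσ]
    exact ⟨by rw [horder _ hLu _]; exact hp1, by rw [horder _ hMu _]; exact hp2⟩
  -- power formula for σ
  have hσpow : ∀ (n : ℕ) (p : ZMod (2^k) × ZMod (2^k)),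
      (σ^n) p = (PadicInt.toZModPow k (lam^n) * p.1, PadicInt.toZModPow k (mu^n) * p.2) := by
    intro n
    induction n with
    | zero => intro p; simp
    | succ n ih =>
      intro p
      have hps : σ^(n+1) = σ * σ^n := by rw [pow_succ']
      rw [hps, Equiv.Perm.mul_apply, ih, hσ]
      refine Prod.ext ?_ ?_ <;> simp [map_pow, pow_succ] <;> ring
  -- ρ characterization
  have hρiff : ∀ s : ℕ, (i + 2 ≤ α + s ∧ j + 2 ≤ β + s) ↔ ρ ≤ s := by
    intro s
    have h0 : max 0 (max ((i+2)-α) ((j+2)-β)) = max ((i+2)-α) ((j+2)-β) :=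
      max_eq_right (Nat.zero_le _)
    rw [hρ, h0]
    rcases le_total ((i+2)-α) ((j+2)-β) with h | h
    · rw [max_eq_right h]; omega
    · rw [max_eq_left h]; omega
  -- fixed point characterization
  have hfix : ∀ p ∈ S, ∀ n : ℕ, ((σ^n) p = p ↔ 2^ρ ∣ n) := by
    intro p hp n
    rw [hS] at hp
    obtain ⟨hp1, hp2⟩ := hp
    rw [hσpow n p, Prod.ext_iff]
    have hc1 : PadicInt.toZModPow k (lam^n) * p.1 = p.1 ↔ (2:ℤ_[2])^(i+2) ∣ (lam^n - 1) := by
      rw [← sub_eq_zero]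
      have he : PadicInt.toZModPow k (lam^n) * p.1 - p.1
          = PadicInt.toZModPow k (lam^n - 1) * p.1 := by
        rw [map_sub, map_one, sub_mul, one_mul]
      rw [he]
      exact zmod_key k (i+2) hik _ p.1 hp1
    have hc2 : PadicInt.toZModPow k (mu^n) * p.2 = p.2 ↔ (2:ℤ_[2])^(j+2) ∣ (mu^n - 1) := by
      rw [← sub_eq_zero]
      have he : PadicInt.toZModPow k (mu^n) * p.2 - p.2
          = PadicInt.toZModPow k (mu^n - 1) * p.2 := by
        rw [map_sub, map_one, sub_mul, one_mul]
      rw [he]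
      exact zmod_key k (j+2) hjk _ p.2 hp2
    rcases Nat.eq_zero_or_pos n with rfl | hn
    · simp [hc1, hc2]
    · obtain ⟨v, hv, hveq⟩ := padic_lte lam ul hul_u α hα2 hldec n (by omega)
      obtain ⟨w, hw, hweq⟩ := padic_lte mu um hum_u β hβ2 hmdec n (by omega)
      rw [hc1, hc2, hveq, hweq, padic_two_prime_dvd _ _ _ hv, padic_two_prime_dvd _ _ _ hw]
      have hdn : 2^ρ ∣ n ↔ ρ ≤ padicValNat 2 n := by
        rw [← Nat.factorization_def n Nat.prime_two]
        exact Nat.Prime.pow_dvd_iff_le_factorization Nat.prime_two (by omega)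
      rw [hdn]
      exact hρiff _
  -- minimal period
  have hminp : ∀ p ∈ S, Function.minimalPeriod (σ • ·) p = 2^ρ := by
    intro p hp
    have hiter : ∀ n : ℕ, ((σ • ·) : _ → _)^[n] p = (σ^n) p := by
      intro n; rw [smul_iterate]; rfl
    have hper : Function.IsPeriodicPt (σ • ·) (2^ρ) p := by
      show ((σ • ·) : _ → _)^[2^ρ] p = p
      rw [hiter]
      exact (hfix p hp _).mpr dvd_rfl
    refine Nat.dvd_antisymm (hper.minimalPeriod_dvd) ?_
    have hmp := Function.isPeriodicPt_minimalPeriod (σ • ·) p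
    have : ((σ • ·) : _ → _)^[Function.minimalPeriod (σ • ·) p] p = p := hmp
    rw [hiter] at this
    exact (hfix p hp _).mp this
  -- orbit cardinality
  have horb : ∀ p ∈ S, Nat.card (MulAction.orbit (Subgroup.zpowers σ) p) = 2^ρ := by
    intro p hp
    haveI : Fintype (MulAction.orbit (Subgroup.zpowers σ) p) := Fintype.ofFinite _
    rw [Nat.card_eq_fintype_card, ← MulAction.minimalPeriod_eq_card]
    exact hminp p hp
  -- orbit is contained in S
  have hSfin : S.Finite := Set.toFinite S
  have himg : σ '' S = S := by
    refine Set.eq_of_subset_of_ncard_le ?_ ?_ hSfin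
    · rintro q ⟨p, hp, rfl⟩; exact hstabS p hp
    · rw [Set.ncard_image_of_injective S σ.injective]
  have hinv : ∀ p ∈ S, σ⁻¹ p ∈ S := by
    intro p hp
    rw [← himg] at hp
    obtain ⟨q, hq, rfl⟩ := hp
    simpa using hq
  have hzpow : ∀ z : ℤ, ∀ p ∈ S, (σ^z) p ∈ S := by
    intro z
    induction z using Int.induction_on with
    | zero => intro p hp; simpa using hp
    | succ n ih =>
      intro p hp
      have : σ^((n:ℤ)+1) = σ^(n:ℤ) * σ := zpow_add_one σ n
      rw [this, Equiv.Perm.mul_apply]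
      exact ih _ (hstabS p hp)
    | pred n ih =>
      intro p hp
      have : σ^(-(n:ℤ)-1) = σ^(-(n:ℤ)) * σ⁻¹ := zpow_sub_one σ (-n)
      rw [this, Equiv.Perm.mul_apply]
      exact ih _ (hinv p hp)
  have horb_sub : ∀ p ∈ S, MulAction.orbit (Subgroup.zpowers σ) p ⊆ S := by
    intro p hp q hq
    obtain ⟨g, rfl⟩ := hq
    show g • p ∈ S
    obtain ⟨z, hz⟩ := Subgroup.mem_zpowers_iff.mp g.2
    have he : g • p = (σ^z) p := by
      rw [Subgroup.smul_def, ← hz]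
      rfl
    rw [he]
    exact hzpow z p hp
  -- arithmetic identity
  have hkey : ν + ρ = i + j := by
    subst hν hρ
    simp only [Nat.max_def, Nat.min_def]
    split_ifs <;> omega
  -- cardinality of S
  have hScard : Nat.card S = 2^(i+1) * 2^(j+1) := by
    have hprod : S = {x : ZMod (2^k) | addOrderOf x = 2^(i+2)} ×ˢ
        {y : ZMod (2^k) | addOrderOf y = 2^(j+2)} := by
      rw [hS]; ext p; simp [Set.mem_prod]
    rw [hprod, Nat.card_congr (Equiv.Set.prod _ _), Nat.card_prod]
    have e1 : Nat.card {x : ZMod (2^k) | addOrderOf x = 2^(i+2)} = 2^(i+1) := by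
      have := card_addOrderOf_zmod k (i+2) hik (by omega)
      exact this
    have e2 : Nat.card {y : ZMod (2^k) | addOrderOf y = 2^(j+2)} = 2^(j+1) := by
      have := card_addOrderOf_zmod k (j+2) hjk (by omega)
      exact this
    rw [e1, e2]
  -- the orbit count
  refine ⟨hstabS, horb, ?_, by omega⟩
  set T := {ω : MulAction.orbitRel.Quotient (Subgroup.zpowers σ)
          (ZMod (2 ^ k) × ZMod (2 ^ k)) //
        ∃ p ∈ S, Quotient.mk (MulAction.orbitRel (Subgroup.zpowers σ) _) p = ω} with hT
  let f : S → T := fun p => ⟨Quotient.mk _ p.1, p.1, p.2, rfl⟩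
  have hfiber : ∀ t : T, Nat.card {p : S // f p = t} = 2^ρ := by
    rintro ⟨ω, q, hq, hmk⟩
    have he : {p : S // f p = ⟨ω, q, hq, hmk⟩} ≃ MulAction.orbit (Subgroup.zpowers σ) q := by
      refine Equiv.ofBijective (fun p => ⟨p.1.1, ?_⟩) ⟨?_, ?_⟩
      · have h1 : Quotient.mk (MulAction.orbitRel (Subgroup.zpowers σ) _) p.1.1 = ω := by
          have := p.2
          exact congrArg Subtype.val (this)
        have h2 := h1.trans hmk.symm
        have h3 := Quotient.exact h2
        exact (MulAction.orbitRel_apply (G := Subgroup.zpowers σ)).mp h3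
      · intro a b hab
        apply Subtype.ext
        apply Subtype.ext
        simpa using hab
      · rintro ⟨r, hr⟩
        have hrS : r ∈ S := horb_sub q hq hr
        refine ⟨⟨⟨r, hrS⟩, ?_⟩, rfl⟩
        apply Subtype.ext
        show Quotient.mk (MulAction.orbitRel (Subgroup.zpowers σ) _) r = ω
        rw [← hmk]
        exact Quotient.sound ((MulAction.orbitRel_apply (G := Subgroup.zpowers σ)).mpr hr)
    rw [Nat.card_congr he]
    exact horb q hq
  haveI : Fintype S := Fintype.ofFinite _
  haveI : Fintype T := Fintype.ofFinite _
  have hsig : Nat.card S = ∑ t : T, Nat.card {p : S // f p = t} := by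
    rw [Nat.card_congr (Equiv.sigmaFiberEquiv f).symm, Nat.card_eq_fintype_card,
      Fintype.card_sigma]
    congr 1
    ext t
    rw [Nat.card_eq_fintype_card]
  have hsum : Nat.card S = Nat.card T * 2^ρ := by
    rw [hsig]
    have : ∀ t : T, Nat.card {p : S // f p = t} = 2^ρ := hfiber
    calc ∑ t : T, Nat.card {p : S // f p = t} = ∑ _t : T, 2^ρ :=
          Finset.sum_congr rfl (fun t _ => hfiber t)
    _ = Nat.card T * 2^ρ := by
        rw [Finset.sum_const, Nat.card_eq_fintype_card, ← Finset.card_univ]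
        simp [mul_comm]
    _ = Nat.card T * 2^ρ := rfl
  have hfinal : Nat.card T * 2^ρ = 4 * 2^ν * 2^ρ := by
    rw [← hsum, hScard]
    have h4 : (4:ℕ) = 2^2 := by norm_num
    rw [h4, ← pow_add, ← pow_add, ← pow_add]
    congr 1
    omega
  have hpos : 0 < 2^ρ := pow_pos (by norm_num) ρ
  have := Nat.eq_of_mul_eq_mul_right hpos hfinal
  rw [hT] at this
  exact this
end

section
/- Let 𝔽_q be a finite field, ℓ an odd prime, and P₁ ∈ 𝔽_q[X] an irreducible polynomial of degree d₁ such that ℓ divides q^{d₁} − 1 and such that the image of X in the field F₁ = 𝔽_q[X]/(P₁) has multiplicative order q^{d₁} − 1 (i.e. P₁ is primitive). Then for every integer m ≥ 0, the polynomial P₁(X^{ℓ^m}) is irreducible in 𝔽_q[X]; in particular 𝔽_q[X]/(P₁(X^{ℓ^m})) is a field, of degree d₁·ℓ^m over 𝔽_q. -/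
open Polynomial IntermediateField

set_option synthInstance.maxHeartbeats 1000000
set_option maxHeartbeats 1000000

/-- Let `𝔽_q` be a finite field, `ℓ` an odd prime, and `P₁ ∈ 𝔽_q[X]`
irreducible of degree `d₁`, with `ℓ ∣ q^d₁ - 1`, such that the image of `X` in
`F₁ = 𝔽_q[X]/(P₁)` has multiplicative order `q^d₁ - 1` (`P₁` is primitive).  Then for every
`m ≥ 0` the polynomial `P₁(X^(ℓ^m))` is irreducible over `𝔽_q`; in particular
`𝔽_q[X]/(P₁(X^(ℓ^m)))` is a field of degree `d₁·ℓ^m` over `𝔽_q`. -/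
theorem stmt15 (F : Type*) [Field F] [Fintype F]
    (ℓ : ℕ) (hℓ : Nat.Prime ℓ) (hodd : ℓ ≠ 2)
    (P₁ : F[X]) (hirr : Irreducible P₁) (d₁ : ℕ) (hdeg : P₁.natDegree = d₁)
    (hdvd : ℓ ∣ Fintype.card F ^ d₁ - 1)
    (hprim : orderOf (AdjoinRoot.root P₁) = Fintype.card F ^ d₁ - 1) :
    ∀ m : ℕ,
      Irreducible (P₁.comp (X ^ ℓ ^ m))
      ∧ (P₁.comp (X ^ ℓ ^ m)).natDegree = d₁ * ℓ ^ m
      ∧ IsField (AdjoinRoot (P₁.comp (X ^ ℓ ^ m))) := by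
  intro m
  haveI : Fact (Irreducible P₁) := ⟨hirr⟩
  set q := Fintype.card F with hq
  set N := q ^ d₁ - 1 with hN
  have hd₁ : 0 < d₁ := hdeg ▸ hirr.natDegree_pos
  have hq2 : 2 ≤ q := Fintype.one_lt_card
  have hqd : 2 ≤ q ^ d₁ := le_trans hq2 (Nat.le_self_pow hd₁.ne' q)
  have hNpos : 0 < N := by omega
  have hu : P₁.leadingCoeff ≠ 0 := leadingCoeff_ne_zero.mpr hirr.ne_zero
  set f := P₁ * C P₁.leadingCoeff⁻¹ with hf
  have hfm : f.Monic := monic_mul_leadingCoeff_inv hirr.ne_zero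
  have hassoc : Associated P₁ f :=
    ⟨(isUnit_C.mpr (isUnit_iff_ne_zero.mpr (inv_ne_zero hu))).unit, rfl⟩
  have hfi : Irreducible f := hassoc.irreducible hirr
  have hfdeg : f.natDegree = d₁ := by
    rw [hf, natDegree_mul_C (inv_ne_zero hu), hdeg]
  -- the key step: for any field `E` and `x : E` with `minpoly F x = f`,
  -- `X ^ ℓ ^ m - C gen` is irreducible over `F⟮x⟯`.
  have hkey : ∀ (E : Type _) [Field E] [Algebra F E] (x : E) (_ : minpoly F x = f),
      Irreducible ((X ^ (ℓ ^ m) : F[X]).map (algebraMap F F⟮x⟯) -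
        C (IntermediateField.AdjoinSimple.gen F x)) := by
    intro E _ _ x hx
    have hint : IsIntegral F x := by
      by_contra h
      exact hfm.ne_zero ((minpoly.eq_zero h).symm.trans hx).symm
    set gen := IntermediateField.AdjoinSimple.gen F x with hgen
    -- `gen` is a root of `P₁`
    have hgenf : Polynomial.aeval gen f = 0 := by
      have := minpoly.aeval F gen
      rwa [IntermediateField.minpoly_gen, hx] at this
    have hgenP : Polynomial.aeval gen P₁ = 0 := by
      have h2 : Polynomial.aeval gen (f * C P₁.leadingCoeff) = 0 := by
        rw [map_mul, hgenf, zero_mul]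
      rwa [hf, mul_assoc, ← map_mul, inv_mul_cancel₀ hu, map_one, mul_one] at h2
    -- transfer the multiplicative order of `root P₁` to `gen`
    have hev : Polynomial.eval₂ (algebraMap F F⟮x⟯) gen P₁ = 0 := by
      rwa [Polynomial.aeval_def] at hgenP
    let φ : AdjoinRoot P₁ →+* F⟮x⟯ := AdjoinRoot.lift (algebraMap F F⟮x⟯) gen hev
    have hφ : Function.Injective φ := φ.injective
    have hord : orderOf gen = N := by
      have := orderOf_injective φ.toMonoidHom hφ (AdjoinRoot.root P₁)
      rwa [show φ.toMonoidHom (AdjoinRoot.root P₁) = gen from AdjoinRoot.lift_root hev,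
        hprim] at this
    -- `F⟮x⟯` is a finite field of cardinality `q ^ d₁`
    haveI : FiniteDimensional F F⟮x⟯ := IntermediateField.adjoin.finiteDimensional hint
    haveI : Finite F⟮x⟯ := Module.finite_of_finite F
    haveI : Fintype F⟮x⟯ := Fintype.ofFinite _
    have hcard : Fintype.card F⟮x⟯ = q ^ d₁ := by
      rw [Module.card_eq_pow_finrank (K := F) (V := F⟮x⟯), IntermediateField.adjoin.finrank hint,
        hx, hfdeg]
    -- `gen` is not an `ℓ`-th power
    have hnopow : ∀ b : F⟮x⟯, b ^ ℓ ≠ gen := by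
      intro b hb
      have h1 : gen ^ N = 1 := by
        rw [← hord]; exact pow_orderOf_eq_one gen
      have hb0 : b ≠ 0 := by
        rintro rfl
        rw [zero_pow hℓ.ne_zero] at hb
        rw [← hb, zero_pow hNpos.ne'] at h1
        exact zero_ne_one h1
      have hbN : b ^ N = 1 := by
        have := FiniteField.pow_card_sub_one_eq_one b hb0
        rwa [hcard] at this
      have hgN : gen ^ (N / ℓ) = 1 := by
        rw [← hb, ← pow_mul, Nat.mul_div_cancel' hdvd, hbN]
      have hdvd2 : N ∣ N / ℓ := by
        have := orderOf_dvd_of_pow_eq_one hgN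
        rwa [hord] at this
      have hltN : N / ℓ < N := Nat.div_lt_self hNpos hℓ.one_lt
      have hposq : 0 < N / ℓ := Nat.div_pos (Nat.le_of_dvd hNpos hdvd) hℓ.pos
      exact absurd (Nat.le_of_dvd hposq hdvd2) (by omega)
    simpa only [Polynomial.map_pow, map_X] using
      X_pow_sub_C_irreducible_of_prime_pow hℓ hodd m hnopow
  -- conclude irreducibility of `f.comp (X ^ ℓ ^ m)` and hence of `P₁.comp (X ^ ℓ ^ m)`
  have hfcomp : Irreducible (f.comp (X ^ ℓ ^ m)) :=
    Polynomial.irreducible_comp hfm (monic_X_pow _) hfi hkey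
  have hcompeq : f.comp (X ^ ℓ ^ m) = P₁.comp (X ^ ℓ ^ m) * C P₁.leadingCoeff⁻¹ := by
    rw [hf, mul_comp, C_comp]
  have hassoc2 : Associated (P₁.comp (X ^ ℓ ^ m)) (f.comp (X ^ ℓ ^ m)) :=
    ⟨(isUnit_C.mpr (isUnit_iff_ne_zero.mpr (inv_ne_zero hu))).unit, hcompeq.symm⟩
  have hPcomp : Irreducible (P₁.comp (X ^ ℓ ^ m)) := hassoc2.symm.irreducible hfcomp
  refine ⟨hPcomp, ?_, ?_⟩
  · rw [natDegree_comp, natDegree_X_pow, hdeg]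
  · haveI : Fact (Irreducible (P₁.comp (X ^ ℓ ^ m))) := ⟨hPcomp⟩
    exact Field.toIsField (AdjoinRoot (P₁.comp (X ^ ℓ ^ m)))
end
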